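/- Given a finite signature, the proof system L_PAKC (extending L_KC with necessitation for interventions, the announcement reduction axioms !_=, !_¬, !_∧, !_K, !_!, K_!, necessitation for announcements, replacement of provable equivalents inside announcements, and the commutation axiom =_!) is sound and strongly complete for the language L_PAKC with respect to epistemic recursive causal models: for every set Γ ∪ {χ} of L_PAKC formulas, Γ proves χ in L_PAKC if and only if every pointed epistemic causal model satisfying all formulas of Γ satisfies χ. -/

import Mathlib

open Classical

/-- A finite signature: variables sorted into exogenous and endogenous, each with a
finite nonempty range of values. -/
structure Sig : Type 1 where
  Var : Type
  exo : Var → Prop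
  Val : Var → Type
  [decEqVar : DecidableEq Var]
  [finVar : Fintype Var]
  [neVar : Nonempty Var]
  [decEqVal : ∀ X : Var, DecidableEq (Val X)]
  [finVal : ∀ X : Var, Fintype (Val X)]
  [neVal : ∀ X : Var, Nonempty (Val X)]

attribute [instance] Sig.decEqVar Sig.finVar Sig.neVar Sig.decEqVal Sig.finVal Sig.neVal

variable {S : Sig}

/-- A valuation: a value for each variable. -/
abbrev Env (S : Sig) : Type := ∀ X : S.Var, S.Val X

instance : Nonempty (Env S) := ⟨fun X => Classical.arbitrary (S.Val X)⟩

/-- Values for all variables other than `V`. -/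
abbrev Others (S : Sig) (V : S.Var) : Type := ∀ X : {X : S.Var // X ≠ V}, S.Val X.val

/-- The restriction of a valuation to the variables other than `V`. -/
def Env.restrict (A : Env S) (V : S.Var) : Others S V := fun X => A X.val

/-- A family of structural functions (only the components at endogenous variables
are meaningful). -/
abbrev StructFuns (S : Sig) : Type := ∀ V : S.Var, Others S V → S.Val V

/-- A valuation complies with the structural functions: the value of each endogenous
variable is obtained by applying its structural function to the values of all
other variables. -/
def Complies (F : StructFuns S) (A : Env S) : Prop :=
  ∀ V : S.Var, ¬ S.exo V → A V = F V (A.restrict V)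

/-- The endogenous variable `V` is directly causally affected by `X` under `F`. -/
def DirAff (F : StructFuns S) (X V : S.Var) : Prop :=
  ¬ S.exo V ∧ ∃ (h : X ≠ V) (g : Others S V) (x₁ x₂ : S.Val X),
    x₁ ≠ x₂ ∧
      F V (Function.update g ⟨X, h⟩ x₁) ≠ F V (Function.update g ⟨X, h⟩ x₂)

/-- `F` is recursive: the transitive closure of the direct causal dependence
relation is asymmetric (transitivity is automatic for `Relation.TransGen`). -/
def RecursiveF (F : StructFuns S) : Prop :=
  ∀ a b : S.Var, Relation.TransGen (DirAff F) a b → ¬ Relation.TransGen (DirAff F) b a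

/-- An assignment of values to a set of pairwise distinct variables. -/
abbrev Intervention (S : Sig) : Type := ∀ X : S.Var, Option (S.Val X)

/-- The empty assignment. -/
def iEmpty (S : Sig) : Intervention S := fun _ => none

/-- Extend an assignment by additionally setting `Y` to `y` (overriding). -/
def iUpd (I : Intervention S) (Y : S.Var) (y : S.Val Y) : Intervention S :=
  Function.update I Y (some y)

/-- Combine assignments, the second overriding the first:  `[X⃗ := x⃗, Y⃗ := y⃗]`. -/
def icomp (I J : Intervention S) : Intervention S := fun W =>
  match J W with
  | some v => some v
  | none => I W

/-- The intervened family of structural functions: intervened variables get the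
constant function returning the assigned value; the rest are unchanged. -/
def intF (F : StructFuns S) (I : Intervention S) : StructFuns S :=
  fun V g => (I V).getD (F V g)

/-- `A'` is the result of intervening with `I` on the valuation `A` (w.r.t. `F`):
exogenous intervened variables get the assigned value, exogenous non-intervened
variables keep their value, and each endogenous variable complies with its new
structural function. -/
def IntervenedVal (F : StructFuns S) (A : Env S) (I : Intervention S) (A' : Env S) : Prop :=
  (∀ X : S.Var, S.exo X → ∀ v : S.Val X, I X = some v → A' X = v) ∧
  (∀ X : S.Var, S.exo X → I X = none → A' X = A X) ∧
  (∀ V : S.Var, ¬ S.exo V → A' V = intF F I V (A'.restrict V))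

/-- The intervened valuation (unique when `F` is recursive). -/
noncomputable def intVal (F : StructFuns S) (A : Env S) (I : Intervention S) : Env S :=
  Classical.epsilon (IntervenedVal F A I)

/-- The language L_PAKC: atoms `Y = y`, negation, conjunction, knowledge,
public announcements, and interventionist counterfactual operators. -/
inductive Form (S : Sig) : Type where
  | eq (Y : S.Var) (y : S.Val Y) : Form S
  | neg (φ : Form S) : Form S
  | conj (φ ψ : Form S) : Form S
  | know (φ : Form S) : Form S
  | ann (α φ : Form S) : Form S
  | int (I : Intervention S) (φ : Form S) : Form S

namespace Form

/-- Material implication, defined from `¬` and `∧` as usual. -/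
def impl (φ ψ : Form S) : Form S := Form.neg (Form.conj φ (Form.neg ψ))

/-- Disjunction, defined from `¬` and `∧` as usual. -/
def orF (φ ψ : Form S) : Form S := Form.neg (Form.conj (Form.neg φ) (Form.neg ψ))

/-- Biconditional. -/
def iffF (φ ψ : Form S) : Form S := Form.conj (impl φ ψ) (impl ψ φ)

end Form

/-- A canonical contradiction. -/
noncomputable def botF (S : Sig) : Form S :=
  let X : S.Var := Classical.arbitrary S.Var
  let x : S.Val X := Classical.arbitrary (S.Val X)
  Form.conj (Form.eq X x) (Form.neg (Form.eq X x))

/-- A canonical tautology. -/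
noncomputable def topF (S : Sig) : Form S := Form.neg (botF S)

/-- Disjunction of a list of formulas (the empty disjunction is a contradiction). -/
noncomputable def bigOr : List (Form S) → Form S
  | [] => botF S
  | φ :: l => l.foldl Form.orF φ

/-- Conjunction of a list of formulas (the empty conjunction is a tautology). -/
noncomputable def bigConj : List (Form S) → Form S
  | [] => topF S
  | φ :: l => l.foldl Form.conj φ

/-- `φ` is an instance of a propositional tautology: it evaluates to `true` under
every Boolean valuation that respects negation and conjunction (treating all
other formulas as atoms). -/
def Tauto (φ : Form S) : Prop :=
  ∀ v : Form S → Bool,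
    (∀ ψ : Form S, v (Form.neg ψ) = !(v ψ)) →
    (∀ ψ χ : Form S, v (Form.conj ψ χ) = (v ψ && v χ)) →
    v φ = true

/-- The assignment `[Z⃗ := z⃗, X := x]` where `Z⃗` lists all variables other than
`X` and `V`, used in the formula `X ⇝ V`. -/
def ltInt (X V : S.Var) (g : ∀ W : {W : S.Var // W ≠ X ∧ W ≠ V}, S.Val W.val)
    (x : S.Val X) : Intervention S := fun W =>
  if h : W = X then some (h.symm ▸ x)
  else if h' : W = V then none
  else some (g ⟨W, ⟨h, h'⟩⟩)

/-- The formula `X ⇝ V`: the disjunction, over tuples `z⃗` of values for all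
variables other than `X` and `V`, distinct values `x₁ ≠ x₂` of `X` and distinct
values `v₁ ≠ v₂` of `V`, of `[Z⃗:=z⃗, X:=x₁]V=v₁ ∧ [Z⃗:=z⃗, X:=x₂]V=v₂`. -/
noncomputable def leadsTo (X V : S.Var) : Form S :=
  bigOr ((Finset.univ.filter
      (fun p : (∀ W : {W : S.Var // W ≠ X ∧ W ≠ V}, S.Val W.val) ×
          (S.Val X × S.Val X) × (S.Val V × S.Val V) =>
        p.2.1.1 ≠ p.2.1.2 ∧ p.2.2.1 ≠ p.2.2.2)).toList.map
    (fun p =>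
      Form.conj
        (Form.int (ltInt X V p.1 p.2.1.1) (Form.eq V p.2.2.1))
        (Form.int (ltInt X V p.1 p.2.1.2) (Form.eq V p.2.2.2))))

/-- The chain `X₀ ⇝ X₁ ∧ ⋯ ∧ X_k ⇝ X_{k+1}`. -/
noncomputable def chainConj (X : ℕ → S.Var) : ℕ → Form S
  | 0 => leadsTo (X 0) (X 1)
  | n + 1 => Form.conj (chainConj X n) (leadsTo (X (n + 1)) (X (n + 2)))

/-- `ψ₁ → (ψ₂ → ⋯ → (ψₙ → φ))` for a list of premises. -/
def impsFrom : List (Form S) → Form S → Form S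
  | [], φ => φ
  | ψ :: l, φ => Form.impl ψ (impsFrom l φ)

/-- Satisfaction of an L_PAKC formula at a pointed epistemic causal model
`(⟨F, T⟩, A)` (the semantics `⊨ᵂ`, without observables). -/
def SatW : Form S → StructFuns S → Set (Env S) → Env S → Prop
  | Form.eq Y y, _, _, A => A Y = y
  | Form.neg φ, F, T, A => ¬ SatW φ F T A
  | Form.conj φ ψ, F, T, A => SatW φ F T A ∧ SatW ψ F T A
  | Form.know φ, F, T, _ => ∀ B ∈ T, SatW φ F T B
  | Form.ann α φ, F, T, A =>
      SatW α F T A → SatW φ F {B | B ∈ T ∧ SatW α F T B} A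
  | Form.int I φ, F, T, A =>
      SatW φ (intF F I) ((fun B => intVal F B I) '' T) (intVal F A I)

/-- The proof system L_PAKC: the system L_KC extended with necessitation for
interventions, the announcement reduction axioms and rules, and the commutation
axiom (=_!). -/
inductive ThmPAKC : Form S → Prop where
  | taut : ∀ {φ : Form S}, Tauto φ → ThmPAKC φ
  | mp : ∀ {φ ψ : Form S}, ThmPAKC (Form.impl φ ψ) → ThmPAKC φ → ThmPAKC ψ
  | a1 : ∀ (I : Intervention S) (Y : S.Var) (y y' : S.Val Y), y ≠ y' →
      ThmPAKC (Form.impl (Form.int I (Form.eq Y y)) (Form.neg (Form.int I (Form.eq Y y'))))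
  | a2 : ∀ (I : Intervention S) (Y : S.Var),
      ThmPAKC (bigOr (((Finset.univ : Finset (S.Val Y)).toList).map
        (fun y => Form.int I (Form.eq Y y))))
  | a3 : ∀ (I : Intervention S) (Y Z : S.Var) (y : S.Val Y) (z : S.Val Z),
      ThmPAKC (Form.impl (Form.conj (Form.int I (Form.eq Y y)) (Form.int I (Form.eq Z z)))
        (Form.int (iUpd I Y y) (Form.eq Z z)))
  | a4 : ∀ (I : Intervention S) (Y : S.Var) (y : S.Val Y),
      ThmPAKC (Form.int (iUpd I Y y) (Form.eq Y y))
  | a5 : ∀ (I : Intervention S) (Y Z : S.Var) (y : S.Val Y) (z : S.Val Z), Y ≠ Z →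
      ThmPAKC (Form.impl
        (Form.conj (Form.int (iUpd I Y y) (Form.eq Z z)) (Form.int (iUpd I Z z) (Form.eq Y y)))
        (Form.int I (Form.eq Z z)))
  | a6 : ∀ (X : ℕ → S.Var) (k : ℕ),
      (∀ i : ℕ, i ≤ k → X i ≠ X (i + 1)) → X (k + 1) ≠ X 0 →
      ThmPAKC (Form.impl (chainConj X k) (Form.neg (leadsTo (X (k + 1)) (X 0))))
  | a7 : ∀ (I : Intervention S) (U : S.Var) (u : S.Val U), S.exo U → I U = none →
      ThmPAKC (Form.iffF (Form.int (iEmpty S) (Form.eq U u)) (Form.int I (Form.eq U u)))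
  | aEmpty : ∀ (Y : S.Var) (y : S.Val Y),
      ThmPAKC (Form.iffF (Form.eq Y y) (Form.int (iEmpty S) (Form.eq Y y)))
  | aNeg : ∀ (I : Intervention S) (φ : Form S),
      ThmPAKC (Form.iffF (Form.int I (Form.neg φ)) (Form.neg (Form.int I φ)))
  | aConj : ∀ (I : Intervention S) (φ ψ : Form S),
      ThmPAKC (Form.iffF (Form.int I (Form.conj φ ψ))
        (Form.conj (Form.int I φ) (Form.int I ψ)))
  | aIntInt : ∀ (I J : Intervention S) (φ : Form S),
      ThmPAKC (Form.iffF (Form.int I (Form.int J φ)) (Form.int (icomp I J) φ))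
  | axK : ∀ (φ ψ : Form S),
      ThmPAKC (Form.impl (Form.know (Form.impl φ ψ))
        (Form.impl (Form.know φ) (Form.know ψ)))
  | necK : ∀ {φ : Form S}, ThmPAKC φ → ThmPAKC (Form.know φ)
  | axT : ∀ (φ : Form S), ThmPAKC (Form.impl (Form.know φ) φ)
  | ax4 : ∀ (φ : Form S), ThmPAKC (Form.impl (Form.know φ) (Form.know (Form.know φ)))
  | ax5 : ∀ (φ : Form S),
      ThmPAKC (Form.impl (Form.neg (Form.know φ)) (Form.know (Form.neg (Form.know φ))))
  | cm : ∀ (I : Intervention S) (φ : Form S),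
      ThmPAKC (Form.iffF (Form.int I (Form.know φ)) (Form.know (Form.int I φ)))
  | kl : ∀ (I : Intervention S) (Y : S.Var) (y : S.Val Y), ¬ S.exo Y →
      (∀ W : S.Var, (I W).isSome ↔ W ≠ Y) →
      ThmPAKC (Form.impl (Form.int I (Form.eq Y y))
        (Form.know (Form.int I (Form.eq Y y))))
  | necInt : ∀ {φ : Form S} (I : Intervention S), ThmPAKC φ → ThmPAKC (Form.int I φ)
  | annEq : ∀ (α : Form S) (I : Intervention S) (Y : S.Var) (y : S.Val Y),
      ThmPAKC (Form.iffF (Form.ann α (Form.int I (Form.eq Y y)))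
        (Form.impl α (Form.int I (Form.eq Y y))))
  | annNeg : ∀ (α φ : Form S),
      ThmPAKC (Form.iffF (Form.ann α (Form.neg φ))
        (Form.impl α (Form.neg (Form.ann α φ))))
  | annConj : ∀ (α φ ψ : Form S),
      ThmPAKC (Form.iffF (Form.ann α (Form.conj φ ψ))
        (Form.conj (Form.ann α φ) (Form.ann α ψ)))
  | annKnow : ∀ (α φ : Form S),
      ThmPAKC (Form.iffF (Form.ann α (Form.know φ))
        (Form.impl α (Form.know (Form.impl α (Form.ann α φ)))))
  | annAnn : ∀ (α β φ : Form S),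
      ThmPAKC (Form.iffF (Form.ann α (Form.ann β φ))
        (Form.ann (Form.conj α (Form.ann α β)) φ))
  | kAnn : ∀ (α φ ψ : Form S),
      ThmPAKC (Form.impl (Form.ann α (Form.impl φ ψ))
        (Form.impl (Form.ann α φ) (Form.ann α ψ)))
  | necAnn : ∀ {φ : Form S} (α : Form S), ThmPAKC φ → ThmPAKC (Form.ann α φ)
  | reAnn : ∀ {α β : Form S} (φ : Form S), ThmPAKC (Form.iffF α β) →
      ThmPAKC (Form.iffF (Form.ann α φ) (Form.ann β φ))
  | intAnn : ∀ (I : Intervention S) (α φ : Form S),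
      ThmPAKC (Form.iffF (Form.int I (Form.ann α φ))
        (Form.ann (Form.int I α) (Form.int I φ)))

/-- Strong derivability from a set of premises in L_PAKC. -/
def ProvPAKC (Γ : Set (Form S)) (φ : Form S) : Prop :=
  ∃ l : List (Form S), (∀ ψ ∈ l, ψ ∈ Γ) ∧ ThmPAKC (impsFrom l φ)

/-! ### Stage 1: theory of intervened valuations -/

section Stage1
variable {S : Sig}

lemma update_eq_self' {V : S.Var} (g : Others S V) (w : {X : S.Var // X ≠ V}) :
    Function.update g w (g w) = g := Function.update_eq_self w g

lemma not_dirAff_update (F : StructFuns S) {V : S.Var} (hV : ¬ S.exo V) {X : S.Var}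
    (h : ¬ DirAff F X V) (hXV : X ≠ V) (g : Others S V) (x : S.Val X) :
    F V (Function.update g ⟨X, hXV⟩ x) = F V g := by
  by_contra hne
  apply h
  refine ⟨hV, hXV, g, x, g ⟨X, hXV⟩, ?_, ?_⟩
  · intro hx
    apply hne
    rw [hx, Function.update_eq_self]
  · rw [Function.update_eq_self]
    exact hne

/-- If two argument tuples agree on all coordinates that directly affect `V`,
then `F V` gives the same value. -/
lemma FV_eq_of_agree (F : StructFuns S) {V : S.Var} (hV : ¬ S.exo V) :
    ∀ (g₁ g₂ : Others S V),
    (∀ w : {X : S.Var // X ≠ V}, g₁ w ≠ g₂ w → ¬ DirAff F w.val V) → F V g₁ = F V g₂ := by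
  have key : ∀ (n : ℕ) (g₁ g₂ : Others S V),
      (Finset.univ.filter (fun w : {X : S.Var // X ≠ V} => g₁ w ≠ g₂ w)).card ≤ n →
      (∀ w : {X : S.Var // X ≠ V}, g₁ w ≠ g₂ w → ¬ DirAff F w.val V) → F V g₁ = F V g₂ := by
    intro n
    induction n with
    | zero =>
      intro g₁ g₂ hcard _
      have : ∀ w, g₁ w = g₂ w := by
        intro w
        by_contra hw
        have : (Finset.univ.filter (fun w : {X : S.Var // X ≠ V} => g₁ w ≠ g₂ w)).Nonempty :=
          ⟨w, by simp [hw]⟩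
        have := Finset.card_pos.mpr this
        omega
      exact congrArg _ (funext this)
    | succ n ih =>
      intro g₁ g₂ hcard hyp
      by_cases hne : ∀ w, g₁ w = g₂ w
      · exact congrArg _ (funext hne)
      · push_neg at hne
        obtain ⟨w, hw⟩ := hne
        set g₁' := Function.update g₁ w (g₂ w) with hg₁'
        have h1 : F V g₁ = F V g₁' :=
          (not_dirAff_update F hV (hyp w hw) w.prop g₁ (g₂ w)).symm
        rw [h1]
        apply ih
        · have hsubset : (Finset.univ.filter (fun u : {X : S.Var // X ≠ V} => g₁' u ≠ g₂ u)) ⊆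
              (Finset.univ.filter (fun u => g₁ u ≠ g₂ u)).erase w := by
            intro u hu
            simp only [Finset.mem_filter, Finset.mem_univ, true_and] at hu
            rw [Finset.mem_erase]
            constructor
            · rintro rfl
              apply hu
              simp [hg₁']
            · simp only [Finset.mem_filter, Finset.mem_univ, true_and]
              intro heq
              apply hu
              rw [hg₁']
              rcases eq_or_ne u w with rfl | hne'
              · simp
              · rw [Function.update_of_ne hne']
                exact heq
          have hle := Finset.card_le_card hsubset
          have hlt : ((Finset.univ.filter (fun u => g₁ u ≠ g₂ u)).erase w).card <
              (Finset.univ.filter (fun u : {X : S.Var // X ≠ V} => g₁ u ≠ g₂ u)).card := by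
            apply Finset.card_erase_lt_of_mem
            simp [hw]
          omega
        · intro u hu
          apply hyp
          rcases eq_or_ne u w with rfl | hne'
          · exact hw
          · rw [hg₁', Function.update_of_ne hne'] at hu
            exact hu
  intro g₁ g₂ hyp
  exact key _ g₁ g₂ le_rfl hyp

lemma intF_eq_of_agree (F : StructFuns S) (I : Intervention S) {V : S.Var} (hV : ¬ S.exo V)
    (g₁ g₂ : Others S V)
    (h : ∀ w : {X : S.Var // X ≠ V}, g₁ w ≠ g₂ w → ¬ DirAff F w.val V) :
    intF F I V g₁ = intF F I V g₂ := by
  cases hIV : I V with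
  | some v => simp [intF, hIV]
  | none => simp only [intF, hIV, Option.getD_none]; exact FV_eq_of_agree F hV g₁ g₂ h

lemma dirAff_intF_subset (F : StructFuns S) (I : Intervention S) {X V : S.Var} :
    DirAff (intF F I) X V → DirAff F X V := by
  rintro ⟨hV, hXV, g, x₁, x₂, hx, hne⟩
  cases hIV : I V with
  | some v => exact absurd (by simp [intF, hIV] : intF F I V (Function.update g ⟨X, hXV⟩ x₁) = intF F I V (Function.update g ⟨X, hXV⟩ x₂)) hne
  | none => exact ⟨hV, hXV, g, x₁, x₂, hx, by simpa [intF, hIV] using hne⟩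

lemma recursiveF_intF {F : StructFuns S} (hF : RecursiveF F) (I : Intervention S) :
    RecursiveF (intF F I) := by
  intro a b hab hba
  exact hF a b (Relation.TransGen.mono (fun _ _ => dirAff_intF_subset F I) _ _ hab)
    (Relation.TransGen.mono (fun _ _ => dirAff_intF_subset F I) _ _ hba)

lemma wf_dirAff {F : StructFuns S} (hF : RecursiveF F) : WellFounded (DirAff F) := by
  have hIrr : IsIrrefl S.Var (Relation.TransGen (DirAff F)) :=
    ⟨fun a h => hF a a h h⟩
  have hTrans : IsTrans S.Var (Relation.TransGen (DirAff F)) := inferInstance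
  have wfT : WellFounded (Relation.TransGen (DirAff F)) :=
    Finite.wellFounded_of_trans_of_irrefl _
  exact Subrelation.wf (fun h => Relation.TransGen.single h) wfT

lemma intervenedVal_exists {F : StructFuns S} (hF : RecursiveF F) (A : Env S)
    (I : Intervention S) : ∃ B, IntervenedVal F A I B := by
  classical
  have wf := wf_dirAff hF
  set step : ∀ V : S.Var, (∀ y : S.Var, DirAff F y V → S.Val y) → S.Val V :=
    fun V rec =>
      if S.exo V then (I V).getD (A V)
      else intF F I V (fun w =>
        if h : DirAff F w.val V then rec w.val h else Classical.arbitrary _) with hstep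
  set B : Env S := fun V => wf.fix step V with hB
  have hBeq : ∀ V, B V = step V (fun y _ => B y) := fun V => wf.fix_eq step V
  refine ⟨B, ?_, ?_, ?_⟩
  · intro X hX v hIX
    rw [hBeq X, hstep]
    simp [hX, hIX]
  · intro X hX hIX
    rw [hBeq X, hstep]
    simp [hX, hIX]
  · intro V hV
    rw [hBeq V, hstep]
    simp only [hV, if_false]
    apply intF_eq_of_agree F I hV
    intro w hw hda
    apply hw
    simp [hda, Env.restrict]

lemma intervenedVal_unique {F : StructFuns S} (hF : RecursiveF F) {A : Env S}
    {I : Intervention S} {B₁ B₂ : Env S} (h₁ : IntervenedVal F A I B₁)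
    (h₂ : IntervenedVal F A I B₂) : B₁ = B₂ := by
  funext V
  induction V using (wf_dirAff hF).induction with
  | _ V ih =>
    by_cases hV : S.exo V
    · cases hIV : I V with
      | some v => rw [h₁.1 V hV v hIV, h₂.1 V hV v hIV]
      | none => rw [h₁.2.1 V hV hIV, h₂.2.1 V hV hIV]
    · rw [h₁.2.2 V hV, h₂.2.2 V hV]
      apply intF_eq_of_agree F I hV
      intro w hw hda
      exact hw (by simp only [Env.restrict]; exact ih w.val hda)

lemma intVal_spec {F : StructFuns S} (hF : RecursiveF F) (A : Env S) (I : Intervention S) :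
    IntervenedVal F A I (intVal F A I) :=
  Classical.epsilon_spec (intervenedVal_exists hF A I)

lemma intVal_eq {F : StructFuns S} (hF : RecursiveF F) {A B : Env S} {I : Intervention S}
    (h : IntervenedVal F A I B) : intVal F A I = B :=
  intervenedVal_unique hF (intVal_spec hF A I) h

lemma complies_intVal {F : StructFuns S} (hF : RecursiveF F) (A : Env S) (I : Intervention S) :
    Complies (intF F I) (intVal F A I) :=
  fun V hV => (intVal_spec hF A I).2.2 V hV

lemma intVal_empty {F : StructFuns S} (hF : RecursiveF F) {A : Env S} (hA : Complies F A) :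
    intVal F A (iEmpty S) = A := by
  apply intVal_eq hF
  refine ⟨?_, ?_, ?_⟩
  · intro X _ v h; simp [iEmpty] at h
  · intro X _ _; rfl
  · intro V hV
    simp only [intF, iEmpty, Option.getD_none]
    exact hA V hV

end Stage1

/-! ### Stage 2: satisfaction lemmas -/

section Stage2
variable {S : Sig} {F : StructFuns S} {T : Set (Env S)} {A : Env S}

lemma satW_eq {Y : S.Var} {y : S.Val Y} : SatW (Form.eq Y y) F T A ↔ A Y = y := Iff.rfl
lemma satW_neg {φ : Form S} : SatW (Form.neg φ) F T A ↔ ¬ SatW φ F T A := Iff.rfl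
lemma satW_conj {φ ψ : Form S} :
    SatW (Form.conj φ ψ) F T A ↔ SatW φ F T A ∧ SatW ψ F T A := Iff.rfl
lemma satW_know {φ : Form S} : SatW (Form.know φ) F T A ↔ ∀ B ∈ T, SatW φ F T B := Iff.rfl
lemma satW_ann {α φ : Form S} : SatW (Form.ann α φ) F T A ↔
    (SatW α F T A → SatW φ F {B | B ∈ T ∧ SatW α F T B} A) := Iff.rfl
lemma satW_int {I : Intervention S} {φ : Form S} : SatW (Form.int I φ) F T A ↔
    SatW φ (intF F I) ((fun B => intVal F B I) '' T) (intVal F A I) := Iff.rfl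
lemma satW_int_eq {I : Intervention S} {Y : S.Var} {y : S.Val Y} :
    SatW (Form.int I (Form.eq Y y)) F T A ↔ intVal F A I Y = y := Iff.rfl

lemma satW_impl {φ ψ : Form S} :
    SatW (Form.impl φ ψ) F T A ↔ (SatW φ F T A → SatW ψ F T A) := by
  show ¬ (SatW φ F T A ∧ ¬ SatW ψ F T A) ↔ _
  tauto

lemma satW_iffF {φ ψ : Form S} :
    SatW (Form.iffF φ ψ) F T A ↔ (SatW φ F T A ↔ SatW ψ F T A) := by
  show SatW (Form.impl φ ψ) F T A ∧ SatW (Form.impl ψ φ) F T A ↔ _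
  rw [satW_impl, satW_impl]
  tauto

lemma satW_orF {φ ψ : Form S} :
    SatW (Form.orF φ ψ) F T A ↔ (SatW φ F T A ∨ SatW ψ F T A) := by
  show ¬ (¬ SatW φ F T A ∧ ¬ SatW ψ F T A) ↔ _
  tauto

lemma satW_botF : ¬ SatW (botF S) F T A := by
  rintro ⟨h1, h2⟩
  exact h2 h1

lemma satW_topF : SatW (topF S) F T A := satW_botF

lemma satW_foldl_orF {l : List (Form S)} {a : Form S} :
    SatW (l.foldl Form.orF a) F T A ↔ (SatW a F T A ∨ ∃ φ ∈ l, SatW φ F T A) := by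
  induction l generalizing a with
  | nil => simp
  | cons b l ih =>
    rw [List.foldl_cons, ih, satW_orF]
    constructor
    · rintro ((h | h) | ⟨φ, hm, hs⟩)
      · exact Or.inl h
      · exact Or.inr ⟨b, by simp, h⟩
      · exact Or.inr ⟨φ, by simp [hm], hs⟩
    · rintro (h | ⟨φ, hm, hs⟩)
      · exact Or.inl (Or.inl h)
      · rcases List.mem_cons.mp hm with rfl | hm
        · exact Or.inl (Or.inr hs)
        · exact Or.inr ⟨φ, hm, hs⟩

lemma satW_bigOr {l : List (Form S)} :
    SatW (bigOr l) F T A ↔ ∃ φ ∈ l, SatW φ F T A := by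
  cases l with
  | nil => simpa [bigOr] using satW_botF
  | cons a l =>
    show SatW (l.foldl Form.orF a) F T A ↔ _
    rw [satW_foldl_orF]
    simp

lemma satW_of_tauto {φ : Form S} (h : Tauto φ) : SatW φ F T A := by
  classical
  set v : Form S → Bool := fun ψ => decide (SatW ψ F T A) with hv
  have hval : v φ = true := by
    apply h
    · intro ψ; simp [hv, satW_neg]
    · intro ψ χ; simp [hv, satW_conj]
  simpa [hv] using of_decide_eq_true hval

lemma satW_impsFrom {l : List (Form S)} {φ : Form S} :
    SatW (impsFrom l φ) F T A ↔ ((∀ ψ ∈ l, SatW ψ F T A) → SatW φ F T A) := by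
  induction l with
  | nil => simp [impsFrom]
  | cons a l ih =>
    show SatW (Form.impl a (impsFrom l φ)) F T A ↔ _
    rw [satW_impl, ih]
    constructor
    · intro h hall
      exact h (hall a (by simp)) (fun ψ hψ => hall ψ (by simp [hψ]))
    · intro h ha hall
      apply h
      intro ψ hψ
      rcases List.mem_cons.mp hψ with rfl | hψ
      exacts [ha, hall ψ hψ]

end Stage2

/-! ### Stage 3: further semantic lemmas about interventions -/

section Stage3
variable {S : Sig} {F : StructFuns S}

lemma intVal_of_some (hF : RecursiveF F) (A : Env S) {I : Intervention S} {X : S.Var}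
    {v : S.Val X} (h : I X = some v) : intVal F A I X = v := by
  have spec := intVal_spec hF A I
  by_cases hX : S.exo X
  · exact spec.1 X hX v h
  · rw [spec.2.2 X hX]; simp [intF, h]

lemma iUpd_same (I : Intervention S) (Y : S.Var) (y : S.Val Y) : iUpd I Y y Y = some y := by
  simp [iUpd]

lemma iUpd_noteq {Y X : S.Var} (I : Intervention S) (h : X ≠ Y) (y : S.Val Y) :
    iUpd I Y y X = I X := by simp [iUpd, Function.update_of_ne h]

lemma intF_iUpd_noteq {I : Intervention S} {Y V : S.Var} (h : V ≠ Y) (y : S.Val Y) :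
    intF F (iUpd I Y y) V = intF F I V := by
  funext g; simp only [intF, iUpd_noteq I h]

lemma intVal_iUpd_of_eq (hF : RecursiveF F) {A : Env S} {I : Intervention S} {Y : S.Var}
    {y : S.Val Y} (h : intVal F A I Y = y) : intVal F A (iUpd I Y y) = intVal F A I := by
  apply intVal_eq hF
  have spec := intVal_spec hF A I
  refine ⟨?_, ?_, ?_⟩
  · intro X hX v hv
    rcases eq_or_ne X Y with rfl | hne
    · rw [iUpd_same] at hv
      cases hv
      exact h
    · rw [iUpd_noteq I hne] at hv
      exact spec.1 X hX v hv
  · intro X hX hv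
    rcases eq_or_ne X Y with rfl | hne
    · rw [iUpd_same] at hv; cases hv
    · rw [iUpd_noteq I hne] at hv
      exact spec.2.1 X hX hv
  · intro V hV
    rcases eq_or_ne V Y with rfl | hne
    · simp only [intF, iUpd_same, Option.getD_some]
      exact h
    · rw [intF_iUpd_noteq hne]
      exact spec.2.2 V hV

lemma iUpd_comm {I : Intervention S} {Y Z : S.Var} (h : Y ≠ Z) (y : S.Val Y) (z : S.Val Z) :
    iUpd (iUpd I Y y) Z z = iUpd (iUpd I Z z) Y y := by
  funext W
  rcases eq_or_ne W Z with rfl | hWZ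
  · rw [iUpd_same, iUpd_noteq _ (Ne.symm h), iUpd_same]
  · rcases eq_or_ne W Y with rfl | hWY
    · rw [iUpd_noteq _ h, iUpd_same, iUpd_same]
    · rw [iUpd_noteq _ hWZ, iUpd_noteq _ hWY, iUpd_noteq _ hWY, iUpd_noteq _ hWZ]

lemma intVal_reversibility (hF : RecursiveF F) {A : Env S} {I : Intervention S}
    {Y Z : S.Var} (hYZ : Y ≠ Z) {y : S.Val Y} {z : S.Val Z}
    (h1 : intVal F A (iUpd I Y y) Z = z) (h2 : intVal F A (iUpd I Z z) Y = y) :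
    intVal F A I = intVal F A (iUpd I Y y) := by
  have e1 : intVal F A (iUpd (iUpd I Y y) Z z) = intVal F A (iUpd I Y y) :=
    intVal_iUpd_of_eq hF h1
  have e2 : intVal F A (iUpd (iUpd I Z z) Y y) = intVal F A (iUpd I Z z) :=
    intVal_iUpd_of_eq hF h2
  have e3 : intVal F A (iUpd I Y y) = intVal F A (iUpd I Z z) := by
    rw [← e1, ← e2, iUpd_comm hYZ]
  have spec1 := intVal_spec hF A (iUpd I Y y)
  have spec2 := intVal_spec hF A (iUpd I Z z)
  apply intVal_eq hF
  refine ⟨?_, ?_, ?_⟩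
  · intro X hX v hv
    rcases eq_or_ne X Y with rfl | hne
    · rw [e3]
      exact spec2.1 X hX v (by rw [iUpd_noteq _ hYZ]; exact hv)
    · exact spec1.1 X hX v (by rw [iUpd_noteq _ hne]; exact hv)
  · intro X hX hv
    rcases eq_or_ne X Y with rfl | hne
    · rw [e3]
      exact spec2.2.1 X hX (by rw [iUpd_noteq _ hYZ]; exact hv)
    · exact spec1.2.1 X hX (by rw [iUpd_noteq _ hne]; exact hv)
  · intro V hV
    rcases eq_or_ne V Y with rfl | hne
    · rw [e3, spec2.2.2 V hV, intF_iUpd_noteq hYZ]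
    · rw [spec1.2.2 V hV, intF_iUpd_noteq hne]

lemma intF_comp (F : StructFuns S) (I J : Intervention S) :
    intF (intF F I) J = intF F (icomp I J) := by
  funext V g
  cases hJ : J V <;> simp [intF, icomp, hJ]

lemma intVal_comp (hF : RecursiveF F) (A : Env S) (I J : Intervention S) :
    intVal F A (icomp I J) = intVal (intF F I) (intVal F A I) J := by
  have hFI := recursiveF_intF hF I
  have specJ := intVal_spec hFI (intVal F A I) J
  have specI := intVal_spec hF A I
  apply intVal_eq hF
  refine ⟨?_, ?_, ?_⟩
  · intro X hX v hv
    cases hJX : J X with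
    | some w =>
      have : w = v := by
        have : icomp I J X = some w := by simp [icomp, hJX]
        rw [this] at hv; exact Option.some.inj hv
      subst this
      exact specJ.1 X hX w hJX
    | none =>
      have hIX : I X = some v := by
        have : icomp I J X = I X := by simp [icomp, hJX]
        rw [this] at hv; exact hv
      rw [specJ.2.1 X hX hJX]
      exact specI.1 X hX v hIX
  · intro X hX hv
    cases hJX : J X with
    | some w => simp [icomp, hJX] at hv
    | none =>
      have hIX : I X = none := by
        have : icomp I J X = I X := by simp [icomp, hJX]
        rw [this] at hv; exact hv
      rw [specJ.2.1 X hX hJX]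
      exact specI.2.1 X hX hIX
  · intro V hV
    rw [specJ.2.2 V hV, intF_comp]

lemma img_comp (hF : RecursiveF F) (I J : Intervention S) (T : Set (Env S)) :
    ((fun B => intVal (intF F I) B J) '' ((fun B => intVal F B I) '' T)) =
      ((fun B => intVal F B (icomp I J)) '' T) := by
  rw [← Set.image_comp]
  apply Set.image_congr'
  intro B
  exact (intVal_comp hF B I J).symm

lemma intVal_indep (hF : RecursiveF F) {I : Intervention S} {Y : S.Var} (hY : ¬ S.exo Y)
    (hfull : ∀ W : S.Var, (I W).isSome ↔ W ≠ Y) (A B : Env S) :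
    intVal F A I = intVal F B I := by
  symm
  apply intVal_eq hF
  have spec := intVal_spec hF A I
  refine ⟨spec.1, ?_, spec.2.2⟩
  intro X hX hIX
  exfalso
  have h1 : ¬ (I X).isSome := by simp [hIX]
  rw [hfull] at h1
  push_neg at h1
  subst h1
  exact hY hX

lemma ltInt_at_X (X V : S.Var) (g : ∀ W : {W : S.Var // W ≠ X ∧ W ≠ V}, S.Val W.val)
    (x : S.Val X) : ltInt X V g x X = some x := by simp [ltInt]

lemma ltInt_at_V {X V : S.Var} (hXV : X ≠ V)
    (g : ∀ W : {W : S.Var // W ≠ X ∧ W ≠ V}, S.Val W.val) (x : S.Val X) :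
    ltInt X V g x V = none := by
  simp [ltInt, Ne.symm hXV]

lemma ltInt_at_other (X V : S.Var) (g : ∀ W : {W : S.Var // W ≠ X ∧ W ≠ V}, S.Val W.val)
    (x : S.Val X) {W : S.Var} (hWX : W ≠ X) (hWV : W ≠ V) :
    ltInt X V g x W = some (g ⟨W, ⟨hWX, hWV⟩⟩) := by
  simp [ltInt, hWX, hWV]

lemma dirAff_of_leadsTo {T : Set (Env S)} {A : Env S} (hF : RecursiveF F) {X V : S.Var}
    (hXV : X ≠ V) (h : SatW (leadsTo X V) F T A) : DirAff F X V := by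
  rw [leadsTo, satW_bigOr] at h
  obtain ⟨φ, hmem, hsat⟩ := h
  rw [List.mem_map] at hmem
  obtain ⟨p, hp, rfl⟩ := hmem
  rw [Finset.mem_toList, Finset.mem_filter] at hp
  obtain ⟨-, hx12, hv12⟩ := hp
  obtain ⟨g, ⟨⟨x₁, x₂⟩, v₁, v₂⟩⟩ := p
  simp only at hx12 hv12
  obtain ⟨h1, h2⟩ := hsat
  have spec1 := intVal_spec hF A (ltInt X V g x₁)
  have spec2 := intVal_spec hF A (ltInt X V g x₂)
  set C₁ := intVal F A (ltInt X V g x₁) with hC₁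
  set C₂ := intVal F A (ltInt X V g x₂) with hC₂
  have h1' : C₁ V = v₁ := h1
  have h2' : C₂ V = v₂ := h2
  have hV : ¬ S.exo V := by
    intro hV
    apply hv12
    rw [← h1', ← h2', spec1.2.1 V hV (ltInt_at_V hXV g x₁),
      spec2.2.1 V hV (ltInt_at_V hXV g x₂)]
  refine ⟨hV, hXV, Env.restrict C₁ V, x₁, x₂, hx12, ?_⟩
  have hX1 : (Env.restrict C₁ V) ⟨X, hXV⟩ = x₁ := intVal_of_some hF A (ltInt_at_X X V g x₁)
  have key1 : Function.update (Env.restrict C₁ V) ⟨X, hXV⟩ x₁ = Env.restrict C₁ V := by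
    rw [← hX1, Function.update_eq_self]
  have key2 : Function.update (Env.restrict C₁ V) ⟨X, hXV⟩ x₂ = Env.restrict C₂ V := by
    funext w
    rcases eq_or_ne w ⟨X, hXV⟩ with rfl | hw
    · rw [Function.update_self]
      exact (intVal_of_some hF A (ltInt_at_X X V g x₂)).symm
    · rw [Function.update_of_ne hw]
      have hwX : w.val ≠ X := fun hq => hw (Subtype.ext hq)
      show C₁ w.val = C₂ w.val
      rw [hC₁, hC₂, intVal_of_some hF A (ltInt_at_other X V g x₁ hwX w.prop),
        intVal_of_some hF A (ltInt_at_other X V g x₂ hwX w.prop)]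
  have hval1 : F V (Env.restrict C₁ V) = v₁ := by
    rw [← h1', spec1.2.2 V hV]
    simp [intF, ltInt_at_V hXV g x₁]
  have hval2 : F V (Env.restrict C₂ V) = v₂ := by
    rw [← h2', spec2.2.2 V hV]
    simp [intF, ltInt_at_V hXV g x₂]
  rw [key1, key2, hval1, hval2]
  exact hv12

lemma satW_chainConj {T : Set (Env S)} {A : Env S} {X : ℕ → S.Var} {k : ℕ}
    (h : SatW (chainConj X k) F T A) :
    ∀ i ≤ k, SatW (leadsTo (X i) (X (i + 1))) F T A := by
  induction k with
  | zero =>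
    intro i hi
    obtain rfl : i = 0 := Nat.le_zero.mp hi
    exact h
  | succ k ih =>
    intro i hi
    obtain ⟨h1, h2⟩ := h
    rcases Nat.lt_succ_iff_lt_or_eq.mp (Nat.lt_succ_of_le hi) with hlt | rfl
    · exact ih h1 i (Nat.lt_succ_iff.mp hlt)
    · exact h2

lemma transGen_chain {R : S.Var → S.Var → Prop} {X : ℕ → S.Var} {k : ℕ}
    (h : ∀ i ≤ k, R (X i) (X (i + 1))) : Relation.TransGen R (X 0) (X (k + 1)) := by
  induction k with
  | zero => exact Relation.TransGen.single (h 0 le_rfl)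
  | succ k ih =>
    exact (ih fun i hi => h i (hi.trans (Nat.le_succ k))).tail (h (k + 1) le_rfl)

end Stage3

/-! ### Stage 4: soundness -/

section Stage4
variable {S : Sig}

/-- Validity over the class of pointed epistemic recursive causal models. -/
def Valid (φ : Form S) : Prop :=
  ∀ (F : StructFuns S) (T : Set (Env S)) (A : Env S),
    RecursiveF F → (∀ B ∈ T, Complies F B) → A ∈ T → SatW φ F T A

theorem thmPAKC_valid {φ : Form S} (h : ThmPAKC φ) : Valid φ := by
  induction h with
  | @taut φ ht => intro F T A hF hC hA; exact satW_of_tauto ht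
  | @mp φ ψ h1 h2 ih1 ih2 =>
    intro F T A hF hC hA
    exact satW_impl.mp (ih1 F T A hF hC hA) (ih2 F T A hF hC hA)
  | a1 I Y y y' hyy' =>
    intro F T A hF hC hA
    rw [satW_impl]
    intro h1
    rw [satW_neg]
    intro h2
    exact hyy' ((satW_int_eq.mp h1).symm.trans (satW_int_eq.mp h2))
  | a2 I Y =>
    intro F T A hF hC hA
    rw [satW_bigOr]
    refine ⟨Form.int I (Form.eq Y (intVal F A I Y)), ?_, rfl⟩
    rw [List.mem_map]
    exact ⟨intVal F A I Y, Finset.mem_toList.mpr (Finset.mem_univ _), rfl⟩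
  | a3 I Y Z y z =>
    intro F T A hF hC hA
    rw [satW_impl]
    rintro ⟨h1, h2⟩
    show intVal F A (iUpd I Y y) Z = z
    rw [intVal_iUpd_of_eq hF (satW_int_eq.mp h1)]
    exact satW_int_eq.mp h2
  | a4 I Y y =>
    intro F T A hF hC hA
    exact satW_int_eq.mpr (intVal_of_some hF A (iUpd_same I Y y))
  | a5 I Y Z y z hYZ =>
    intro F T A hF hC hA
    rw [satW_impl]
    rintro ⟨h1, h2⟩
    show intVal F A I Z = z
    rw [intVal_reversibility hF hYZ (satW_int_eq.mp h1) (satW_int_eq.mp h2)]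
    exact satW_int_eq.mp h1
  | a6 X k hadj hlast =>
    intro F T A hF hC hA
    rw [satW_impl]
    intro hchain
    rw [satW_neg]
    intro hlt
    have hd : ∀ i ≤ k, DirAff F (X i) (X (i + 1)) := fun i hi =>
      dirAff_of_leadsTo hF (hadj i hi) (satW_chainConj hchain i hi)
    exact hF (X 0) (X (k + 1)) (transGen_chain hd)
      (Relation.TransGen.single (dirAff_of_leadsTo hF hlast hlt))
  | a7 I U u hU hIU =>
    intro F T A hF hC hA
    rw [satW_iffF]
    show intVal F A (iEmpty S) U = u ↔ intVal F A I U = u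
    rw [(intVal_spec hF A (iEmpty S)).2.1 U hU rfl, (intVal_spec hF A I).2.1 U hU hIU]
  | aEmpty Y y =>
    intro F T A hF hC hA
    rw [satW_iffF]
    show A Y = y ↔ intVal F A (iEmpty S) Y = y
    rw [intVal_empty hF (hC A hA)]
  | aNeg I φ =>
    intro F T A hF hC hA
    rw [satW_iffF]
    exact Iff.rfl
  | aConj I φ ψ =>
    intro F T A hF hC hA
    rw [satW_iffF]
    exact Iff.rfl
  | aIntInt I J φ =>
    intro F T A hF hC hA
    rw [satW_iffF]
    show SatW φ (intF (intF F I) J) _ (intVal (intF F I) (intVal F A I) J) ↔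
      SatW φ (intF F (icomp I J)) _ (intVal F A (icomp I J))
    rw [intF_comp, img_comp hF, intVal_comp hF]
  | axK φ ψ =>
    intro F T A hF hC hA
    rw [satW_impl]
    intro h1
    rw [satW_impl]
    intro h2 B hB
    exact satW_impl.mp (h1 B hB) (h2 B hB)
  | @necK φ h ih =>
    intro F T A hF hC hA
    intro B hB
    exact ih F T B hF hC hB
  | axT φ =>
    intro F T A hF hC hA
    rw [satW_impl]
    intro h
    exact h A hA
  | ax4 φ =>
    intro F T A hF hC hA
    rw [satW_impl]
    intro h B hB C hCm
    exact h C hCm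
  | ax5 φ =>
    intro F T A hF hC hA
    rw [satW_impl]
    intro h B hB
    exact h
  | cm I φ =>
    intro F T A hF hC hA
    rw [satW_iffF]
    constructor
    · intro h B hB
      exact h (intVal F B I) ⟨B, hB, rfl⟩
    · rintro h B' ⟨B, hB, rfl⟩
      exact h B hB
  | kl I Y y hY hfull =>
    intro F T A hF hC hA
    rw [satW_impl]
    intro h B hB
    show intVal F B I Y = y
    rw [intVal_indep hF hY hfull B A]
    exact satW_int_eq.mp h
  | @necInt φ I h ih =>
    intro F T A hF hC hA
    refine ih (intF F I) _ _ (recursiveF_intF hF I) ?_ ⟨A, hA, rfl⟩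
    rintro B' ⟨B, hB, rfl⟩
    exact complies_intVal hF B I
  | annEq α I Y y =>
    intro F T A hF hC hA
    rw [satW_iffF, satW_impl]
    constructor
    · intro h hα; exact h hα
    · intro h hα; exact h hα
  | annNeg α φ =>
    intro F T A hF hC hA
    rw [satW_iffF, satW_impl]
    constructor
    · intro h hα hann
      exact (h hα) (hann hα)
    · intro h hα hφ
      exact (h hα) fun _ => hφ
  | annConj α φ ψ =>
    intro F T A hF hC hA
    rw [satW_iffF]
    constructor
    · intro h
      exact ⟨fun hα => (h hα).1, fun hα => (h hα).2⟩
    · rintro ⟨h1, h2⟩ hα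
      exact ⟨h1 hα, h2 hα⟩
  | annKnow α φ =>
    intro F T A hF hC hA
    rw [satW_iffF, satW_impl]
    constructor
    · intro h hα B hB
      rw [satW_impl]
      intro hαB _
      exact h hα B ⟨hB, hαB⟩
    · rintro h hα B ⟨hB, hαB⟩
      have h2 := satW_impl.mp (h hα B hB) hαB
      exact h2 hαB
  | annAnn α β φ =>
    intro F T A hF hC hA
    rw [satW_iffF]
    have hset : {B | B ∈ T ∧ SatW (Form.conj α (Form.ann α β)) F T B} =
        {B | B ∈ {C | C ∈ T ∧ SatW α F T C} ∧
          SatW β F {C | C ∈ T ∧ SatW α F T C} B} := by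
      ext B
      simp only [Set.mem_setOf_eq, satW_conj, satW_ann]
      tauto
    constructor
    · rintro h ⟨hα, hβ'⟩
      have := h hα (hβ' hα)
      rw [hset]
      exact this
    · intro h hα hβ
      have := h ⟨hα, fun _ => hβ⟩
      rw [hset] at this
      exact this
  | kAnn α φ ψ =>
    intro F T A hF hC hA
    rw [satW_impl]
    intro h
    rw [satW_impl]
    intro hf hα
    have h1 : SatW (Form.impl φ ψ) F {B | B ∈ T ∧ SatW α F T B} A := h hα
    exact satW_impl.mp h1 (hf hα)
  | @necAnn φ α h ih =>
    intro F T A hF hC hA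
    intro hα
    exact ih F _ A hF (fun B hB => hC B hB.1) ⟨hA, hα⟩
  | @reAnn α β φ h ih =>
    intro F T A hF hC hA
    rw [satW_iffF]
    have hiff : ∀ B ∈ T, (SatW α F T B ↔ SatW β F T B) := fun B hB =>
      satW_iffF.mp (ih F T B hF hC hB)
    have hset : {B | B ∈ T ∧ SatW α F T B} = {B | B ∈ T ∧ SatW β F T B} := by
      ext B
      simp only [Set.mem_setOf_eq]
      constructor <;> rintro ⟨hB, hs⟩
      · exact ⟨hB, (hiff B hB).mp hs⟩
      · exact ⟨hB, (hiff B hB).mpr hs⟩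
    rw [satW_ann, satW_ann, hset]
    exact imp_congr (hiff A hA) Iff.rfl
  | intAnn I α φ =>
    intro F T A hF hC hA
    rw [satW_iffF]
    have hset : (fun B => intVal F B I) '' {B | B ∈ T ∧ SatW (Form.int I α) F T B} =
        {B' | B' ∈ ((fun B => intVal F B I) '' T) ∧
          SatW α (intF F I) ((fun B => intVal F B I) '' T) B'} := by
      ext B'
      constructor
      · rintro ⟨B, ⟨hB, hα⟩, rfl⟩
        exact ⟨⟨B, hB, rfl⟩, hα⟩
      · rintro ⟨⟨B, hB, rfl⟩, hα⟩
        exact ⟨B, ⟨hB, hα⟩, rfl⟩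
    constructor
    · intro h hant
      show SatW φ (intF F I)
        ((fun B => intVal F B I) '' {B | B ∈ T ∧ SatW (Form.int I α) F T B}) (intVal F A I)
      rw [hset]
      exact h hant
    · intro h hant
      have := h hant
      rw [← hset]
      exact this

theorem provPAKC_sound {Γ : Set (Form S)} {χ : Form S} (h : ProvPAKC Γ χ) :
    ∀ (F : StructFuns S) (T : Set (Env S)) (A : Env S),
      RecursiveF F → T.Nonempty → (∀ B ∈ T, Complies F B) → A ∈ T →
      (∀ ψ ∈ Γ, SatW ψ F T A) → SatW χ F T A := by
  obtain ⟨l, hl, hthm⟩ := h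
  intro F T A hF _ hC hA hΓ
  exact satW_impsFrom.mp (thmPAKC_valid hthm F T A hF hC hA)
    (fun ψ hψ => hΓ ψ (hl ψ hψ))

end Stage4

/-! ### Stage 5: Boolean valuations and propositional toolkit -/

section Stage5
variable {S : Sig}

section BV
variable {v : Form S → Bool}
  (hn : ∀ ψ : Form S, v (Form.neg ψ) = !(v ψ))
  (hc : ∀ ψ χ : Form S, v (Form.conj ψ χ) = (v ψ && v χ))

include hn hc

lemma bv_impl (a b : Form S) : v (Form.impl a b) = (!(v a) || v b) := by
  rw [Form.impl, hn, hc, hn]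
  cases v a <;> cases v b <;> rfl

lemma bv_orF (a b : Form S) : v (Form.orF a b) = (v a || v b) := by
  rw [Form.orF, hn, hc, hn, hn]
  cases v a <;> cases v b <;> rfl

lemma bv_iffF (a b : Form S) : v (Form.iffF a b) = (v a == v b) := by
  rw [Form.iffF, hc, bv_impl hn hc, bv_impl hn hc]
  cases v a <;> cases v b <;> rfl

lemma bv_botF : v (botF S) = false := by
  rw [botF]
  show v (Form.conj _ (Form.neg _)) = false
  rw [hc, hn]
  cases v (Form.eq _ _) <;> rfl

lemma bv_topF : v (topF S) = true := by
  rw [topF, hn, bv_botF hn hc]; rfl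

lemma bv_foldl_conj (l : List (Form S)) (a : Form S) :
    v (l.foldl Form.conj a) = (v a && l.all v) := by
  induction l generalizing a with
  | nil => simp
  | cons b l ih =>
    rw [List.foldl_cons, ih, hc, List.all_cons]
    cases v a <;> cases v b <;> simp

lemma bv_bigConj (l : List (Form S)) : v (bigConj l) = l.all v := by
  cases l with
  | nil => rw [bigConj]; simp [bv_topF hn hc]
  | cons a l =>
    rw [bigConj, bv_foldl_conj hn hc, List.all_cons]

lemma bv_foldl_orF (l : List (Form S)) (a : Form S) :
    v (l.foldl Form.orF a) = (v a || l.any v) := by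
  induction l generalizing a with
  | nil => simp
  | cons b l ih =>
    rw [List.foldl_cons, ih, bv_orF hn hc, List.any_cons]
    cases v a <;> cases v b <;> simp

lemma bv_bigOr (l : List (Form S)) : v (bigOr l) = l.any v := by
  cases l with
  | nil => rw [bigOr]; simp [bv_botF hn hc]
  | cons a l => rw [bigOr, bv_foldl_orF hn hc, List.any_cons]

lemma bv_impsFrom (l : List (Form S)) (φ : Form S) :
    v (impsFrom l φ) = (!(l.all v) || v φ) := by
  induction l with
  | nil => simp [impsFrom]
  | cons a l ih =>
    rw [impsFrom, bv_impl hn hc, ih, List.all_cons]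
    cases v a <;> simp

end BV

namespace ThmPAKC

variable {S : Sig}

lemma mp2 {a b c : Form S} (h : ThmPAKC (Form.impl a (Form.impl b c)))
    (ha : ThmPAKC a) (hb : ThmPAKC b) : ThmPAKC c := (h.mp ha).mp hb

lemma iff_mp {a b : Form S} (h : ThmPAKC (Form.iffF a b)) : ThmPAKC (Form.impl a b) := by
  refine mp ?_ h
  apply taut
  intro v hn hc
  rw [bv_impl hn hc, bv_iffF hn hc, bv_impl hn hc]
  cases v a <;> cases v b <;> rfl

lemma iff_mpr {a b : Form S} (h : ThmPAKC (Form.iffF a b)) : ThmPAKC (Form.impl b a) := by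
  refine mp ?_ h
  apply taut
  intro v hn hc
  rw [bv_impl hn hc, bv_iffF hn hc, bv_impl hn hc]
  cases v a <;> cases v b <;> rfl

lemma iff_refl (a : Form S) : ThmPAKC (Form.iffF a a) := by
  apply taut
  intro v hn hc
  rw [bv_iffF hn hc]
  simp

lemma iff_symm {a b : Form S} (h : ThmPAKC (Form.iffF a b)) : ThmPAKC (Form.iffF b a) := by
  refine mp ?_ h
  apply taut
  intro v hn hc
  rw [bv_impl hn hc, bv_iffF hn hc, bv_iffF hn hc]
  cases v a <;> cases v b <;> rfl

lemma iff_trans {a b c : Form S} (h1 : ThmPAKC (Form.iffF a b))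
    (h2 : ThmPAKC (Form.iffF b c)) : ThmPAKC (Form.iffF a c) := by
  refine mp2 ?_ h1 h2
  apply taut
  intro v hn hc
  rw [bv_impl hn hc, bv_impl hn hc, bv_iffF hn hc, bv_iffF hn hc, bv_iffF hn hc]
  cases v a <;> cases v b <;> cases v c <;> rfl

lemma iff_intro {a b : Form S} (h1 : ThmPAKC (Form.impl a b))
    (h2 : ThmPAKC (Form.impl b a)) : ThmPAKC (Form.iffF a b) := by
  refine mp2 ?_ h1 h2
  apply taut
  intro v hn hc
  simp only [bv_impl hn hc, bv_iffF hn hc]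
  cases v a <;> cases v b <;> rfl

lemma cong_neg {a b : Form S} (h : ThmPAKC (Form.iffF a b)) :
    ThmPAKC (Form.iffF (Form.neg a) (Form.neg b)) := by
  refine mp ?_ h
  apply taut
  intro v hn hc
  rw [bv_impl hn hc, bv_iffF hn hc, bv_iffF hn hc, hn, hn]
  cases v a <;> cases v b <;> rfl

lemma cong_conj {a b c d : Form S} (h1 : ThmPAKC (Form.iffF a b))
    (h2 : ThmPAKC (Form.iffF c d)) :
    ThmPAKC (Form.iffF (Form.conj a c) (Form.conj b d)) := by
  refine mp2 ?_ h1 h2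
  apply taut
  intro v hn hc
  rw [bv_impl hn hc, bv_impl hn hc, bv_iffF hn hc, bv_iffF hn hc, bv_iffF hn hc, hc, hc]
  cases v a <;> cases v b <;> cases v c <;> cases v d <;> rfl

lemma cong_impl {a b c d : Form S} (h1 : ThmPAKC (Form.iffF a b))
    (h2 : ThmPAKC (Form.iffF c d)) :
    ThmPAKC (Form.iffF (Form.impl a c) (Form.impl b d)) := by
  refine mp2 ?_ h1 h2
  apply taut
  intro v hn hc
  rw [bv_impl hn hc, bv_impl hn hc, bv_iffF hn hc, bv_iffF hn hc, bv_iffF hn hc,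
    bv_impl hn hc, bv_impl hn hc]
  cases v a <;> cases v b <;> cases v c <;> cases v d <;> rfl

lemma know_mp {a b : Form S} (h : ThmPAKC (Form.impl a b)) :
    ThmPAKC (Form.impl (Form.know a) (Form.know b)) := (axK a b).mp (necK h)

lemma cong_know {a b : Form S} (h : ThmPAKC (Form.iffF a b)) :
    ThmPAKC (Form.iffF (Form.know a) (Form.know b)) :=
  iff_intro (know_mp (iff_mp h)) (know_mp (iff_mpr h))

/-- `[I]` distributes over implication, derived from aNeg and aConj. -/
lemma int_impl (I : Intervention S) (a b : Form S) :
    ThmPAKC (Form.iffF (Form.int I (Form.impl a b))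
      (Form.impl (Form.int I a) (Form.int I b))) := by
  have h1 : ThmPAKC (Form.iffF (Form.int I (Form.impl a b))
      (Form.neg (Form.int I (Form.conj a (Form.neg b))))) := aNeg I _
  have h2 : ThmPAKC (Form.iffF (Form.int I (Form.conj a (Form.neg b)))
      (Form.conj (Form.int I a) (Form.int I (Form.neg b)))) := aConj I _ _
  have h3 : ThmPAKC (Form.iffF (Form.int I (Form.neg b)) (Form.neg (Form.int I b))) :=
    aNeg I b
  exact iff_trans h1 (cong_neg (iff_trans h2 (cong_conj (iff_refl _) h3)))

lemma int_mp {a b : Form S} (I : Intervention S) (h : ThmPAKC (Form.impl a b)) :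
    ThmPAKC (Form.impl (Form.int I a) (Form.int I b)) :=
  (iff_mp (int_impl I a b)).mp (necInt I h)

lemma cong_int {a b : Form S} (I : Intervention S) (h : ThmPAKC (Form.iffF a b)) :
    ThmPAKC (Form.iffF (Form.int I a) (Form.int I b)) :=
  iff_intro (int_mp I (iff_mp h)) (int_mp I (iff_mpr h))

lemma ann_mp {a b : Form S} (α : Form S) (h : ThmPAKC (Form.impl a b)) :
    ThmPAKC (Form.impl (Form.ann α a) (Form.ann α b)) :=
  (kAnn α a b).mp (necAnn α h)

lemma cong_ann_right {a b : Form S} (α : Form S) (h : ThmPAKC (Form.iffF a b)) :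
    ThmPAKC (Form.iffF (Form.ann α a) (Form.ann α b)) :=
  iff_intro (ann_mp α (iff_mp h)) (ann_mp α (iff_mpr h))

lemma imp_bigOr {l : List (Form S)} {ψ : Form S} (h : ψ ∈ l) :
    ThmPAKC (Form.impl ψ (bigOr l)) := by
  apply taut
  intro v hn hc
  rw [bv_impl hn hc, bv_bigOr hn hc]
  cases hv : v ψ
  · rfl
  · simp only [Bool.not_true, Bool.false_or]
    exact List.any_eq_true.mpr ⟨ψ, h, hv⟩

lemma thm_impsFrom_iff {l : List (Form S)} {φ : Form S} :
    ThmPAKC (impsFrom l φ) ↔ ThmPAKC (Form.impl (bigConj l) φ) := by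
  have hiff : ThmPAKC (Form.iffF (impsFrom l φ) (Form.impl (bigConj l) φ)) := by
    apply taut
    intro v hn hc
    rw [bv_iffF hn hc, bv_impsFrom hn hc, bv_impl hn hc, bv_bigConj hn hc]
    simp
  exact ⟨fun h => (iff_mp hiff).mp h, fun h => (iff_mpr hiff).mp h⟩

end ThmPAKC

end Stage5

/-! ### Stage 6: consistency, Lindenbaum, maximal consistent sets -/

section Stage6
variable {S : Sig}

lemma list_all_congr {α : Type*} {l : List α} {p q : α → Bool}
    (h : ∀ a ∈ l, p a = q a) : l.all p = l.all q := by
  induction l with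
  | nil => rfl
  | cons a l ih =>
    rw [List.all_cons, List.all_cons, h a (by simp), ih (fun b hb => h b (by simp [hb]))]

/-- Consistency. -/
def ConsS (Γ : Set (Form S)) : Prop := ¬ ProvPAKC Γ (botF S)

lemma impsFrom_nil (φ : Form S) : impsFrom [] φ = φ := rfl

lemma prov_of_thm {Γ : Set (Form S)} {φ : Form S} (h : ThmPAKC φ) : ProvPAKC Γ φ :=
  ⟨[], by simp, h⟩

lemma prov_mem {Γ : Set (Form S)} {φ : Form S} (h : φ ∈ Γ) : ProvPAKC Γ φ := by
  refine ⟨[φ], by simpa using h, ?_⟩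
  show ThmPAKC (Form.impl φ φ)
  apply ThmPAKC.taut
  intro v hn hc
  rw [bv_impl hn hc]
  cases v φ <;> rfl

lemma prov_mono {Γ Γ' : Set (Form S)} {φ : Form S} (hs : Γ ⊆ Γ') (h : ProvPAKC Γ φ) :
    ProvPAKC Γ' φ := by
  obtain ⟨l, hl, ht⟩ := h
  exact ⟨l, fun ψ hψ => hs (hl ψ hψ), ht⟩

lemma prov_mp {Γ : Set (Form S)} {φ ψ : Form S} (h1 : ProvPAKC Γ (Form.impl φ ψ))
    (h2 : ProvPAKC Γ φ) : ProvPAKC Γ ψ := by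
  obtain ⟨l1, hl1, ht1⟩ := h1
  obtain ⟨l2, hl2, ht2⟩ := h2
  refine ⟨l1 ++ l2, ?_, ?_⟩
  · intro χ hχ
    rcases List.mem_append.mp hχ with h | h
    exacts [hl1 χ h, hl2 χ h]
  · rw [ThmPAKC.thm_impsFrom_iff] at ht1 ht2 ⊢
    refine ThmPAKC.mp2 ?_ ht1 ht2
    apply ThmPAKC.taut
    intro v hn hc
    simp only [bv_impl hn hc, bv_bigConj hn hc, List.all_append]
    cases l1.all v <;> cases l2.all v <;> cases v φ <;> cases v ψ <;> rfl

open Classical in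
lemma con_insert_neg {Γ : Set (Form S)} {χ : Form S} (h : ¬ ProvPAKC Γ χ) :
    ConsS (insert (Form.neg χ) Γ) := by
  intro hbot
  apply h
  obtain ⟨l, hl, ht⟩ := hbot
  classical
  set l' := l.filter (fun ψ => decide (ψ ≠ Form.neg χ)) with hl'
  refine ⟨l', ?_, ?_⟩
  · intro ψ hψ
    rw [hl', List.mem_filter] at hψ
    obtain ⟨hψl, hψne⟩ := hψ
    rcases hl ψ hψl with h1 | h1
    · exact absurd h1 (of_decide_eq_true hψne)
    · exact h1
  · rw [ThmPAKC.thm_impsFrom_iff] at ht ⊢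
    refine ThmPAKC.mp ?_ ht
    apply ThmPAKC.taut
    intro v hn hc
    simp only [bv_impl hn hc, bv_bigConj hn hc, bv_botF hn hc, Bool.or_false]
    cases hall' : l'.all v
    · simp
    · cases hχ : v χ
      · have hall : l.all v = true := by
          rw [List.all_eq_true]
          intro ψ hψ
          by_cases hψχ : ψ = Form.neg χ
          · subst hψχ
            rw [hn, hχ]
            rfl
          · exact List.all_eq_true.mp hall' ψ
              (List.mem_filter.mpr ⟨hψ, decide_eq_true hψχ⟩)
        rw [hall]
        rfl
      · simp [hχ]

open Classical in
lemma con_insert_or {Γ : Set (Form S)} (h : ConsS Γ) (φ : Form S) :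
    ConsS (insert φ Γ) ∨ ConsS (insert (Form.neg φ) Γ) := by
  by_contra hcc
  push_neg at hcc
  obtain ⟨hc1, hc2⟩ := hcc
  rw [ConsS, not_not] at hc1 hc2
  apply h
  obtain ⟨l1, hl1, ht1⟩ := hc1
  obtain ⟨l2, hl2, ht2⟩ := hc2
  classical
  set l1' := l1.filter (fun ψ => decide (ψ ≠ φ)) with hl1'
  set l2' := l2.filter (fun ψ => decide (ψ ≠ Form.neg φ)) with hl2'
  refine ⟨l1' ++ l2', ?_, ?_⟩
  · intro ψ hψ
    rcases List.mem_append.mp hψ with hψ' | hψ'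
    · rw [hl1', List.mem_filter] at hψ'
      rcases hl1 ψ hψ'.1 with h1 | h1
      · exact absurd h1 (of_decide_eq_true hψ'.2)
      · exact h1
    · rw [hl2', List.mem_filter] at hψ'
      rcases hl2 ψ hψ'.1 with h1 | h1
      · exact absurd h1 (of_decide_eq_true hψ'.2)
      · exact h1
  · rw [ThmPAKC.thm_impsFrom_iff] at ht1 ht2 ⊢
    refine ThmPAKC.mp2 ?_ ht1 ht2
    apply ThmPAKC.taut
    intro v hn hc
    simp only [bv_impl hn hc, bv_bigConj hn hc, bv_botF hn hc, Bool.or_false,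
      List.all_append]
    cases hall : (l1'.all v && l2'.all v)
    · simp
    · rw [Bool.and_eq_true] at hall
      obtain ⟨hall1, hall2⟩ := hall
      cases hφ : v φ
      · have : l2.all v = true := by
          rw [List.all_eq_true]
          intro ψ hψ
          by_cases hψφ : ψ = Form.neg φ
          · subst hψφ; rw [hn, hφ]; rfl
          · exact List.all_eq_true.mp hall2 ψ
              (List.mem_filter.mpr ⟨hψ, decide_eq_true hψφ⟩)
        rw [this]
        simp
      · have : l1.all v = true := by
          rw [List.all_eq_true]
          intro ψ hψ
          by_cases hψφ : ψ = φ
          · subst hψφ; exact hφ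
          · exact List.all_eq_true.mp hall1 ψ
              (List.mem_filter.mpr ⟨hψ, decide_eq_true hψφ⟩)
        rw [this]
        simp

/-- Maximal consistent set. -/
def MCS (D : Set (Form S)) : Prop := ConsS D ∧ ∀ φ : Form S, φ ∈ D ∨ Form.neg φ ∈ D

lemma lindenbaum {Γ : Set (Form S)} (h : ConsS Γ) : ∃ D : Set (Form S), Γ ⊆ D ∧ MCS D := by
  have hchainlem : ∀ c ⊆ {Θ : Set (Form S) | ConsS Θ},
      IsChain (fun x1 x2 => x1 ⊆ x2) c → c.Nonempty →
      ∃ ub ∈ {Θ : Set (Form S) | ConsS Θ}, ∀ s ∈ c, s ⊆ ub := by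
    intro c hcS hchain hcne
    refine ⟨⋃₀ c, ?_, fun s hs => Set.subset_sUnion_of_mem hs⟩
    have hfind : ∀ l : List (Form S), (∀ ψ ∈ l, ψ ∈ ⋃₀ c) → ∃ t ∈ c, ∀ ψ ∈ l, ψ ∈ t := by
      intro l
      induction l with
      | nil =>
        intro _
        obtain ⟨t, ht⟩ := hcne
        exact ⟨t, ht, by simp⟩
      | cons a l ih =>
        intro hmem
        obtain ⟨t, htc, hlt⟩ := ih fun ψ hψ => hmem ψ (List.mem_cons_of_mem a hψ)
        obtain ⟨s, hsc, has⟩ := hmem a List.mem_cons_self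
        rcases eq_or_ne s t with rfl | hne
        · refine ⟨s, hsc, ?_⟩
          intro ψ hψ
          rcases List.mem_cons.mp hψ with rfl | hψ
          exacts [has, hlt ψ hψ]
        · rcases hchain hsc htc hne with hsub | hsub
          · refine ⟨t, htc, ?_⟩
            intro ψ hψ
            rcases List.mem_cons.mp hψ with rfl | hψ
            exacts [hsub has, hlt ψ hψ]
          · refine ⟨s, hsc, ?_⟩
            intro ψ hψ
            rcases List.mem_cons.mp hψ with rfl | hψ
            exacts [has, hsub (hlt ψ hψ)]
    rintro ⟨l, hl, ht⟩
    obtain ⟨t, htc, hlt⟩ := hfind l hl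
    exact hcS htc ⟨l, hlt, ht⟩
  obtain ⟨D, hDsub, hDmax⟩ :=
    zorn_subset_nonempty {Θ : Set (Form S) | ConsS Θ} hchainlem Γ h
  refine ⟨D, hDsub, hDmax.prop, ?_⟩
  intro φ
  rcases con_insert_or hDmax.prop φ with hc | hc
  · left
    have hsub : insert φ D ⊆ D := hDmax.2 hc (Set.subset_insert _ _)
    exact hsub (Set.mem_insert _ _)
  · right
    have hsub : insert (Form.neg φ) D ⊆ D := hDmax.2 hc (Set.subset_insert _ _)
    exact hsub (Set.mem_insert _ _)

namespace MCS
variable {D : Set (Form S)} (hD : MCS D)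

include hD

lemma prov_mem {φ : Form S} (h : ProvPAKC D φ) : φ ∈ D := by
  rcases hD.2 φ with hm | hm
  · exact hm
  · exfalso
    apply hD.1
    have hb : ThmPAKC (Form.impl φ (Form.impl (Form.neg φ) (botF S))) := by
      apply ThmPAKC.taut
      intro v hn hc
      simp only [bv_impl hn hc, bv_botF hn hc, hn]
      cases v φ <;> rfl
    exact prov_mp (prov_mp (prov_of_thm hb) h) (_root_.prov_mem hm)

lemma thm_mem {φ : Form S} (h : ThmPAKC φ) : φ ∈ D := hD.prov_mem (prov_of_thm h)

lemma mem_mp {φ ψ : Form S} (h1 : Form.impl φ ψ ∈ D) (h2 : φ ∈ D) : ψ ∈ D :=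
  hD.prov_mem (prov_mp (_root_.prov_mem h1) (_root_.prov_mem h2))

lemma neg_mem_iff {φ : Form S} : Form.neg φ ∈ D ↔ φ ∉ D := by
  constructor
  · intro h1 h2
    apply hD.1
    have hb : ThmPAKC (Form.impl φ (Form.impl (Form.neg φ) (botF S))) := by
      apply ThmPAKC.taut
      intro v hn hc
      simp only [bv_impl hn hc, bv_botF hn hc, hn]
      cases v φ <;> rfl
    exact prov_mp (prov_mp (prov_of_thm hb) (_root_.prov_mem h2)) (_root_.prov_mem h1)
  · intro h1
    rcases hD.2 φ with hm | hm
    · exact absurd hm h1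
    · exact hm

lemma iff_mem {φ ψ : Form S} (h : ThmPAKC (Form.iffF φ ψ)) : φ ∈ D ↔ ψ ∈ D :=
  ⟨fun hm => hD.mem_mp (hD.thm_mem (ThmPAKC.iff_mp h)) hm,
   fun hm => hD.mem_mp (hD.thm_mem (ThmPAKC.iff_mpr h)) hm⟩

lemma conj_mem {φ ψ : Form S} : Form.conj φ ψ ∈ D ↔ φ ∈ D ∧ ψ ∈ D := by
  have t1 : ThmPAKC (Form.impl (Form.conj φ ψ) φ) := by
    apply ThmPAKC.taut; intro v hn hc
    simp only [bv_impl hn hc, hc]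
    cases v φ <;> cases v ψ <;> rfl
  have t2 : ThmPAKC (Form.impl (Form.conj φ ψ) ψ) := by
    apply ThmPAKC.taut; intro v hn hc
    simp only [bv_impl hn hc, hc]
    cases v φ <;> cases v ψ <;> rfl
  have t3 : ThmPAKC (Form.impl φ (Form.impl ψ (Form.conj φ ψ))) := by
    apply ThmPAKC.taut; intro v hn hc
    simp only [bv_impl hn hc, hc]
    cases v φ <;> cases v ψ <;> rfl
  constructor
  · intro h
    exact ⟨hD.mem_mp (hD.thm_mem t1) h, hD.mem_mp (hD.thm_mem t2) h⟩
  · rintro ⟨h1, h2⟩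
    exact hD.mem_mp (hD.mem_mp (hD.thm_mem t3) h1) h2

lemma bigOr_mem {l : List (Form S)} (h : bigOr l ∈ D) : ∃ ψ ∈ l, ψ ∈ D := by
  by_contra hno
  push_neg at hno
  have hnegs : ∀ ψ ∈ l.map Form.neg, ψ ∈ D := by
    intro ψ hψ
    rw [List.mem_map] at hψ
    obtain ⟨χ, hχ, rfl⟩ := hψ
    exact hD.neg_mem_iff.mpr (hno χ hχ)
  have ht : ThmPAKC (impsFrom (l.map Form.neg) (Form.neg (bigOr l))) := by
    apply ThmPAKC.taut
    intro v hn hc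
    rw [bv_impsFrom hn hc, hn, bv_bigOr hn hc]
    have hmap : (l.map Form.neg).all v = l.all (fun ψ => !(v ψ)) := by
      rw [List.all_map]
      exact list_all_congr (fun ψ _ => hn ψ)
    rw [hmap, List.any_eq_not_all_not]
    cases l.all (fun ψ => !(v ψ)) <;> rfl
  have : Form.neg (bigOr l) ∈ D := hD.prov_mem ⟨l.map Form.neg, hnegs, ht⟩
  exact (hD.neg_mem_iff.mp this) h

end MCS

end Stage6

/-! ### Stage 7: reduction to basic formulas -/

section Stage7
variable {S : Sig}

/-- Basic formulas: Boolean/epistemic combinations of atoms `Y=y` and `[I]Y=y`. -/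
inductive IsBasic : Form S → Prop
  | eq (Y : S.Var) (y : S.Val Y) : IsBasic (Form.eq Y y)
  | intEq (I : Intervention S) (Y : S.Var) (y : S.Val Y) : IsBasic (Form.int I (Form.eq Y y))
  | neg {φ : Form S} : IsBasic φ → IsBasic (Form.neg φ)
  | conj {φ ψ : Form S} : IsBasic φ → IsBasic ψ → IsBasic (Form.conj φ ψ)
  | know {φ : Form S} : IsBasic φ → IsBasic (Form.know φ)

lemma IsBasic.impl {φ ψ : Form S} (h1 : IsBasic φ) (h2 : IsBasic ψ) :
    IsBasic (Form.impl φ ψ) := .neg (.conj h1 (.neg h2))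

lemma int_basic (I : Intervention S) {ψ : Form S} (h : IsBasic ψ) :
    ∃ χ : Form S, IsBasic χ ∧ ThmPAKC (Form.iffF (Form.int I ψ) χ) := by
  induction h with
  | eq Y y => exact ⟨Form.int I (Form.eq Y y), .intEq I Y y, ThmPAKC.iff_refl _⟩
  | intEq J Y y =>
    exact ⟨Form.int (icomp I J) (Form.eq Y y), .intEq _ Y y, ThmPAKC.aIntInt I J _⟩
  | neg hφ ih =>
    obtain ⟨χ, hχ, hiff⟩ := ih
    exact ⟨Form.neg χ, .neg hχ,
      ThmPAKC.iff_trans (ThmPAKC.aNeg I _) (ThmPAKC.cong_neg hiff)⟩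
  | conj h1 h2 ih1 ih2 =>
    obtain ⟨χ1, hχ1, hiff1⟩ := ih1
    obtain ⟨χ2, hχ2, hiff2⟩ := ih2
    exact ⟨Form.conj χ1 χ2, .conj hχ1 hχ2,
      ThmPAKC.iff_trans (ThmPAKC.aConj I _ _) (ThmPAKC.cong_conj hiff1 hiff2)⟩
  | know hφ ih =>
    obtain ⟨χ, hχ, hiff⟩ := ih
    exact ⟨Form.know χ, .know hχ,
      ThmPAKC.iff_trans (ThmPAKC.cm I _) (ThmPAKC.cong_know hiff)⟩

lemma ann_basic {α : Form S} (hα : IsBasic α) {ψ : Form S} (h : IsBasic ψ) :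
    ∃ χ : Form S, IsBasic χ ∧ ThmPAKC (Form.iffF (Form.ann α ψ) χ) := by
  induction h with
  | eq Y y =>
    refine ⟨Form.impl α (Form.int (iEmpty S) (Form.eq Y y)), hα.impl (.intEq _ _ _), ?_⟩
    exact ThmPAKC.iff_trans (ThmPAKC.cong_ann_right α (ThmPAKC.aEmpty Y y))
      (ThmPAKC.annEq α _ Y y)
  | intEq J Y y =>
    exact ⟨Form.impl α (Form.int J (Form.eq Y y)), hα.impl (.intEq _ _ _),
      ThmPAKC.annEq α J Y y⟩
  | neg hφ ih =>
    obtain ⟨χ, hχ, hiff⟩ := ih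
    refine ⟨Form.impl α (Form.neg χ), hα.impl (.neg hχ), ?_⟩
    exact ThmPAKC.iff_trans (ThmPAKC.annNeg α _)
      (ThmPAKC.cong_impl (ThmPAKC.iff_refl α) (ThmPAKC.cong_neg hiff))
  | conj h1 h2 ih1 ih2 =>
    obtain ⟨χ1, hχ1, hiff1⟩ := ih1
    obtain ⟨χ2, hχ2, hiff2⟩ := ih2
    exact ⟨Form.conj χ1 χ2, .conj hχ1 hχ2,
      ThmPAKC.iff_trans (ThmPAKC.annConj α _ _) (ThmPAKC.cong_conj hiff1 hiff2)⟩
  | know hφ ih =>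
    obtain ⟨χ, hχ, hiff⟩ := ih
    refine ⟨Form.impl α (Form.know (Form.impl α χ)), hα.impl (.know (hα.impl hχ)), ?_⟩
    refine ThmPAKC.iff_trans (ThmPAKC.annKnow α _) ?_
    exact ThmPAKC.cong_impl (ThmPAKC.iff_refl α)
      (ThmPAKC.cong_know (ThmPAKC.cong_impl (ThmPAKC.iff_refl α) hiff))

lemma basicify (φ : Form S) : ∃ χ : Form S, IsBasic χ ∧ ThmPAKC (Form.iffF φ χ) := by
  induction φ with
  | eq Y y => exact ⟨Form.eq Y y, .eq Y y, ThmPAKC.iff_refl _⟩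
  | neg φ ih =>
    obtain ⟨χ, hχ, hiff⟩ := ih
    exact ⟨Form.neg χ, .neg hχ, ThmPAKC.cong_neg hiff⟩
  | conj φ ψ ih1 ih2 =>
    obtain ⟨χ1, hχ1, hiff1⟩ := ih1
    obtain ⟨χ2, hχ2, hiff2⟩ := ih2
    exact ⟨Form.conj χ1 χ2, .conj hχ1 hχ2, ThmPAKC.cong_conj hiff1 hiff2⟩
  | know φ ih =>
    obtain ⟨χ, hχ, hiff⟩ := ih
    exact ⟨Form.know χ, .know hχ, ThmPAKC.cong_know hiff⟩
  | ann α φ ihα ihφ =>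
    obtain ⟨α', hα', hiffα⟩ := ihα
    obtain ⟨φ', hφ', hiffφ⟩ := ihφ
    obtain ⟨χ, hχ, hiff⟩ := ann_basic hα' hφ'
    refine ⟨χ, hχ, ?_⟩
    have h1 : ThmPAKC (Form.iffF (Form.ann α φ) (Form.ann α' φ)) := ThmPAKC.reAnn φ hiffα
    have h2 : ThmPAKC (Form.iffF (Form.ann α' φ) (Form.ann α' φ')) :=
      ThmPAKC.cong_ann_right α' hiffφ
    exact ThmPAKC.iff_trans h1 (ThmPAKC.iff_trans h2 hiff)
  | int I φ ih =>
    obtain ⟨φ', hφ', hiffφ⟩ := ih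
    obtain ⟨χ, hχ, hiff⟩ := int_basic I hφ'
    exact ⟨χ, hχ, ThmPAKC.iff_trans (ThmPAKC.cong_int I hiffφ) hiff⟩

end Stage7

/-! ### Stage 8a: canonical values from maximal consistent sets -/

section Stage8a
variable {S : Sig}

noncomputable def mcsVal (D : Set (Form S)) (I : Intervention S) (Y : S.Var) : S.Val Y :=
  Classical.epsilon (fun y => Form.int I (Form.eq Y y) ∈ D)

variable {D : Set (Form S)}

lemma mcsVal_exists (hD : MCS D) (I : Intervention S) (Y : S.Var) :
    ∃ y, Form.int I (Form.eq Y y) ∈ D := by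
  have h2 := hD.thm_mem (ThmPAKC.a2 I Y)
  obtain ⟨ψ, hmem, hψ⟩ := hD.bigOr_mem h2
  rw [List.mem_map] at hmem
  obtain ⟨y, -, rfl⟩ := hmem
  exact ⟨y, hψ⟩

lemma mcsVal_mem (hD : MCS D) (I : Intervention S) (Y : S.Var) :
    Form.int I (Form.eq Y (mcsVal D I Y)) ∈ D :=
  Classical.epsilon_spec (mcsVal_exists hD I Y)

lemma mcsVal_unique (hD : MCS D) {I : Intervention S} {Y : S.Var} {y : S.Val Y}
    (h : Form.int I (Form.eq Y y) ∈ D) : mcsVal D I Y = y := by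
  by_contra hne
  have h1 := hD.mem_mp (hD.thm_mem (ThmPAKC.a1 I Y _ _ hne)) (mcsVal_mem hD I Y)
  exact (hD.neg_mem_iff.mp h1) h

lemma iUpd_eq_self {I : Intervention S} {X : S.Var} {v : S.Val X} (h : I X = some v) :
    iUpd I X v = I := by
  funext W
  rcases eq_or_ne W X with rfl | hne
  · rw [iUpd_same, h]
  · rw [iUpd_noteq I hne]

lemma mcsVal_some (hD : MCS D) {I : Intervention S} {X : S.Var} {v : S.Val X}
    (h : I X = some v) : mcsVal D I X = v := by
  apply mcsVal_unique hD
  have h4 := hD.thm_mem (ThmPAKC.a4 I X v)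
  rwa [iUpd_eq_self h] at h4

lemma mcsVal_exo_none (hD : MCS D) {I : Intervention S} {X : S.Var} (hX : S.exo X)
    (h : I X = none) : mcsVal D I X = mcsVal D (iEmpty S) X := by
  apply mcsVal_unique hD
  have ha7 := hD.iff_mem (ThmPAKC.a7 I X (mcsVal D (iEmpty S) X) hX h)
  exact ha7.mp (mcsVal_mem hD (iEmpty S) X)

lemma mcsVal_iUpd (hD : MCS D) (I : Intervention S) (Y Z : S.Var) :
    mcsVal D (iUpd I Y (mcsVal D I Y)) Z = mcsVal D I Z := by
  apply mcsVal_unique hD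
  refine hD.mem_mp (hD.thm_mem (ThmPAKC.a3 I Y Z _ _)) ?_
  exact hD.conj_mem.mpr ⟨mcsVal_mem hD I Y, mcsVal_mem hD I Z⟩

/-- The full intervention fixing everything except `V` according to `g`. -/
def IFull (V : S.Var) (g : Others S V) : Intervention S :=
  fun W => if h : W = V then none else some (g ⟨W, h⟩)

lemma IFull_at_self (V : S.Var) (g : Others S V) : IFull V g V = none := dif_pos rfl

lemma IFull_at_other {V W : S.Var} (g : Others S V) (h : W ≠ V) :
    IFull V g W = some (g ⟨W, h⟩) := dif_neg h

lemma IFull_isSome (V : S.Var) (g : Others S V) : ∀ W, (IFull V g W).isSome ↔ W ≠ V := by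
  intro W
  by_cases h : W = V <;> simp [IFull, h]

lemma foldl_iUpd_at (val : ∀ W : S.Var, S.Val W) :
    ∀ (L : List S.Var) (J : Intervention S) (W : S.Var),
    (L.foldl (fun J' W' => iUpd J' W' (val W')) J) W =
      if W ∈ L then some (val W) else J W := by
  intro L
  induction L with
  | nil => intro J W; simp
  | cons a L ih =>
    intro J W
    rw [List.foldl_cons, ih]
    by_cases hWL : W ∈ L
    · simp [hWL]
    · by_cases hWa : W = a
      · subst hWa; simp [hWL, iUpd_same]
      · simp [hWL, hWa, iUpd_noteq _ hWa]

lemma mcsVal_foldl (hD : MCS D) (I : Intervention S) :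
    ∀ (L : List S.Var) (J : Intervention S), (∀ Z, mcsVal D J Z = mcsVal D I Z) →
    ∀ Z, mcsVal D (L.foldl (fun J' W' => iUpd J' W' (mcsVal D I W')) J) Z = mcsVal D I Z := by
  intro L
  induction L with
  | nil => intro J hJ Z; exact hJ Z
  | cons a L ih =>
    intro J hJ Z
    rw [List.foldl_cons]
    apply ih
    intro Z'
    have ha : mcsVal D I a = mcsVal D J a := (hJ a).symm
    rw [ha, mcsVal_iUpd hD J a Z', hJ Z']

lemma mcsVal_to_full (hD : MCS D) {I : Intervention S} {V : S.Var} (hIV : I V = none) :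
    ∀ Z, mcsVal D (IFull V (fun w => mcsVal D I w.val)) Z = mcsVal D I Z := by
  classical
  set L := (Finset.univ.filter (fun W : S.Var => W ≠ V)).toList with hL
  have hIeq : IFull V (fun w => mcsVal D I w.val) =
      L.foldl (fun J' W' => iUpd J' W' (mcsVal D I W')) I := by
    funext W
    rw [foldl_iUpd_at]
    by_cases hWV : W = V
    · subst hWV
      have hnm : W ∉ L := by simp [hL]
      rw [if_neg hnm, IFull_at_self, hIV]
    · have hm : W ∈ L := by simp [hL, hWV]
      rw [if_pos hm, IFull_at_other _ hWV]
  intro Z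
  rw [hIeq]
  exact mcsVal_foldl hD I L I (fun _ => rfl) Z

end Stage8a

/-! ### Stage 8b: canonical model and truth lemma -/

section Stage8b
variable {S : Sig}

namespace ThmPAKC

lemma imp_compose {p q r s : Form S} (h1 : ThmPAKC (Form.impl p (Form.impl q r)))
    (h2 : ThmPAKC (Form.impl r s)) : ThmPAKC (Form.impl p (Form.impl q s)) := by
  refine mp2 ?_ h1 h2
  apply taut
  intro v hn hc
  simp only [bv_impl hn hc]
  cases v p <;> cases v q <;> cases v r <;> cases v s <;> rfl

lemma imp_self (φ : Form S) : ThmPAKC (Form.impl φ φ) := by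
  apply taut
  intro v hn hc
  rw [bv_impl hn hc]
  cases v φ <;> rfl

lemma know_impsFrom (l : List (Form S)) (φ : Form S) :
    ThmPAKC (Form.impl (Form.know (impsFrom l φ))
      (impsFrom (l.map Form.know) (Form.know φ))) := by
  induction l generalizing φ with
  | nil => exact imp_self _
  | cons a l ih =>
    show ThmPAKC (Form.impl (Form.know (Form.impl a (impsFrom l φ)))
      (Form.impl (Form.know a) (impsFrom (l.map Form.know) (Form.know φ))))
    exact imp_compose (axK a (impsFrom l φ)) (ih (φ := φ))

end ThmPAKC

lemma exists_mcs_neg {D : Set (Form S)} (hD : MCS D) {φ : Form S}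
    (h : Form.neg (Form.know φ) ∈ D) :
    ∃ D' : Set (Form S), MCS D' ∧ Form.neg φ ∈ D' ∧
      (∀ χ : Form S, Form.know χ ∈ D ↔ Form.know χ ∈ D') := by
  have hcon : ConsS (insert (Form.neg φ) {ψ : Form S | Form.know ψ ∈ D}) := by
    apply con_insert_neg
    intro hprov
    obtain ⟨l, hl, ht⟩ := hprov
    have hk : ThmPAKC (impsFrom (l.map Form.know) (Form.know φ)) :=
      (ThmPAKC.know_impsFrom l φ).mp (ThmPAKC.necK ht)
    have hmem : Form.know φ ∈ D := by
      refine hD.prov_mem ⟨l.map Form.know, ?_, hk⟩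
      intro ψ hψ
      rw [List.mem_map] at hψ
      obtain ⟨χ, hχ, rfl⟩ := hψ
      exact hl χ hχ
    exact (hD.neg_mem_iff.mp h) hmem
  obtain ⟨D', hsub, hD'⟩ := lindenbaum hcon
  refine ⟨D', hD', hsub (Set.mem_insert _ _), ?_⟩
  intro χ
  constructor
  · intro hχ
    have h4 : Form.know (Form.know χ) ∈ D := hD.mem_mp (hD.thm_mem (ThmPAKC.ax4 χ)) hχ
    exact hsub (Set.mem_insert_of_mem _ h4)
  · intro hχ
    by_contra hnχ
    have hn : Form.neg (Form.know χ) ∈ D := hD.neg_mem_iff.mpr hnχ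
    have h5 : Form.know (Form.neg (Form.know χ)) ∈ D :=
      hD.mem_mp (hD.thm_mem (ThmPAKC.ax5 χ)) hn
    have : Form.neg (Form.know χ) ∈ D' := hsub (Set.mem_insert_of_mem _ h5)
    exact (hD'.neg_mem_iff.mp this) hχ

/-- The canonical epistemic class of a maximal consistent set. -/
def canW (D0 : Set (Form S)) : Set (Set (Form S)) :=
  {D | MCS D ∧ ∀ φ : Form S, Form.know φ ∈ D ↔ Form.know φ ∈ D0}

/-- Canonical structural functions. -/
noncomputable def canF (D0 : Set (Form S)) : StructFuns S :=
  fun V g => mcsVal D0 (IFull V g) V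

/-- Canonical valuation of a maximal consistent set. -/
noncomputable def canEnv (D : Set (Form S)) : Env S := fun Y => mcsVal D (iEmpty S) Y

/-- Canonical epistemic range. -/
def canT (D0 : Set (Form S)) : Set (Env S) := {B | ∃ D ∈ canW D0, canEnv D = B}

lemma canF_agrees {D0 D : Set (Form S)} (hD0 : MCS D0) (hD : D ∈ canW D0)
    {V : S.Var} (hV : ¬ S.exo V) (g : Others S V) :
    canF D0 V g = mcsVal D (IFull V g) V := by
  have hmem := mcsVal_mem hD.1 (IFull V g) V
  have hkl := hD.1.mem_mp
    (hD.1.thm_mem (ThmPAKC.kl (IFull V g) V _ hV (IFull_isSome V g))) hmem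
  have hl0 : Form.know (Form.int (IFull V g) (Form.eq V (mcsVal D (IFull V g) V))) ∈ D0 :=
    (hD.2 _).mp hkl
  have hmem0 : Form.int (IFull V g) (Form.eq V (mcsVal D (IFull V g) V)) ∈ D0 :=
    hD0.mem_mp (hD0.thm_mem (ThmPAKC.axT _)) hl0
  exact mcsVal_unique hD0 hmem0

lemma leadsTo_mem_of_dirAff {D0 : Set (Form S)} (hD0 : MCS D0) {X V : S.Var}
    (h : DirAff (canF D0) X V) : leadsTo X V ∈ D0 := by
  obtain ⟨hV, hXV, g, x₁, x₂, hx12, hne⟩ := h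
  set g'' : ∀ W : {W : S.Var // W ≠ X ∧ W ≠ V}, S.Val W.val :=
    fun w => g ⟨w.val, w.prop.2⟩ with hg''
  have hIeq : ∀ x : S.Val X, ltInt X V g'' x = IFull V (Function.update g ⟨X, hXV⟩ x) := by
    intro x
    funext W
    rcases eq_or_ne W X with rfl | hWX
    · rw [IFull_at_other _ hXV, Function.update_self]
      simp [ltInt]
    · rcases eq_or_ne W V with rfl | hWV
      · rw [IFull_at_self]
        simp [ltInt, Ne.symm hXV, hWX]
      · rw [IFull_at_other _ hWV, ltInt_at_other X V g'' x hWX hWV,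
          Function.update_of_ne (fun hq => hWX (Subtype.ext_iff.mp hq))]
  have hm1 : Form.int (ltInt X V g'' x₁)
      (Form.eq V (canF D0 V (Function.update g ⟨X, hXV⟩ x₁))) ∈ D0 := by
    rw [hIeq]
    exact mcsVal_mem hD0 _ V
  have hm2 : Form.int (ltInt X V g'' x₂)
      (Form.eq V (canF D0 V (Function.update g ⟨X, hXV⟩ x₂))) ∈ D0 := by
    rw [hIeq]
    exact mcsVal_mem hD0 _ V
  have hconj := hD0.conj_mem.mpr ⟨hm1, hm2⟩
  set p : (∀ W : {W : S.Var // W ≠ X ∧ W ≠ V}, S.Val W.val) ×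
      (S.Val X × S.Val X) × (S.Val V × S.Val V) :=
    ⟨g'', ⟨(x₁, x₂), (canF D0 V (Function.update g ⟨X, hXV⟩ x₁),
      canF D0 V (Function.update g ⟨X, hXV⟩ x₂))⟩⟩ with hp
  have hpmem : p ∈ (Finset.univ.filter
      (fun q : (∀ W : {W : S.Var // W ≠ X ∧ W ≠ V}, S.Val W.val) ×
          (S.Val X × S.Val X) × (S.Val V × S.Val V) =>
        q.2.1.1 ≠ q.2.1.2 ∧ q.2.2.1 ≠ q.2.2.2)).toList := by
    rw [Finset.mem_toList, Finset.mem_filter]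
    exact ⟨Finset.mem_univ _, hx12, hne⟩
  have hfmem : Form.conj
      (Form.int (ltInt X V g'' x₁)
        (Form.eq V (canF D0 V (Function.update g ⟨X, hXV⟩ x₁))))
      (Form.int (ltInt X V g'' x₂)
        (Form.eq V (canF D0 V (Function.update g ⟨X, hXV⟩ x₂)))) ∈
      ((Finset.univ.filter
        (fun q : (∀ W : {W : S.Var // W ≠ X ∧ W ≠ V}, S.Val W.val) ×
            (S.Val X × S.Val X) × (S.Val V × S.Val V) =>
          q.2.1.1 ≠ q.2.1.2 ∧ q.2.2.1 ≠ q.2.2.2)).toList.map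
      (fun q =>
        Form.conj
          (Form.int (ltInt X V q.1 q.2.1.1) (Form.eq V q.2.2.1))
          (Form.int (ltInt X V q.1 q.2.1.2) (Form.eq V q.2.2.2)))) := by
    rw [List.mem_map]
    exact ⟨p, hpmem, rfl⟩
  exact hD0.mem_mp (hD0.thm_mem (ThmPAKC.imp_bigOr hfmem)) hconj

lemma dirAff_ne {F : StructFuns S} {X V : S.Var} (h : DirAff F X V) : X ≠ V := by
  obtain ⟨-, hne, -⟩ := h
  exact hne

lemma transGen_to_chain {R : S.Var → S.Var → Prop} {a b : S.Var}
    (h : Relation.TransGen R a b) :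
    ∃ (X : ℕ → S.Var) (k : ℕ), X 0 = a ∧ X (k + 1) = b ∧ ∀ i ≤ k, R (X i) (X (i + 1)) := by
  induction h with
  | single hr =>
    rename_i c
    refine ⟨fun i => if i = 0 then a else c, 0, by simp, by simp, ?_⟩
    intro i hi
    obtain rfl : i = 0 := Nat.le_zero.mp hi
    simpa using hr
  | tail hTG hr ih =>
    obtain ⟨X, k, h0, h1, hstep⟩ := ih
    rename_i b' c
    refine ⟨fun i => if i ≤ k + 1 then X i else c, k + 1, by simp [h0], ?_, ?_⟩
    · have : ¬ (k + 2 ≤ k + 1) := by omega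
      simp [this]
    · intro i hi
      rcases Nat.lt_or_ge i (k + 1) with hlt | hge
      · have hi1 : i ≤ k := Nat.lt_succ_iff.mp hlt
        have e1 : i ≤ k + 1 := by omega
        have e2 : i + 1 ≤ k + 1 := by omega
        simp only [if_pos e1, if_pos e2]
        exact hstep i hi1
      · obtain rfl : i = k + 1 := le_antisymm hi hge
        have e1 : k + 1 ≤ k + 1 := le_rfl
        have e2 : ¬ (k + 2 ≤ k + 1) := by omega
        simp only [if_pos e1, if_neg e2]
        rw [h1]
        exact hr
end Stage8b

/-! ### Stage 8c: recursivity, truth lemma, completeness -/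

section Stage8c
variable {S : Sig}

lemma chainConj_mem {D0 : Set (Form S)} (hD0 : MCS D0) {X : ℕ → S.Var} :
    ∀ k : ℕ, (∀ i ≤ k, leadsTo (X i) (X (i + 1)) ∈ D0) → chainConj X k ∈ D0 := by
  intro k
  induction k with
  | zero => intro h; exact h 0 le_rfl
  | succ k ih =>
    intro h
    exact hD0.conj_mem.mpr
      ⟨ih fun i hi => h i (hi.trans (Nat.le_succ k)), h (k + 1) le_rfl⟩

lemma canF_recursive {D0 : Set (Form S)} (hD0 : MCS D0) : RecursiveF (canF D0) := by
  intro a b hab hba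
  have hcycle : Relation.TransGen (DirAff (canF D0)) a a := hab.trans hba
  obtain ⟨X, k, h0, h1, hstep⟩ := transGen_to_chain hcycle
  cases k with
  | zero => exact dirAff_ne (hstep 0 le_rfl) (h0.trans h1.symm)
  | succ m =>
    have hadj : ∀ i ≤ m, X i ≠ X (i + 1) := fun i hi =>
      dirAff_ne (hstep i (hi.trans (Nat.le_succ m)))
    have hlastDA : DirAff (canF D0) (X (m + 1)) (X 0) := by
      have hd := hstep (m + 1) le_rfl
      rwa [h1, ← h0] at hd
    have hlastne : X (m + 1) ≠ X 0 := dirAff_ne hlastDA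
    have hchain : chainConj X m ∈ D0 := chainConj_mem hD0 m fun i hi =>
      leadsTo_mem_of_dirAff hD0 (hstep i (hi.trans (Nat.le_succ m)))
    have ha6 := hD0.mem_mp (hD0.thm_mem (ThmPAKC.a6 X m hadj hlastne)) hchain
    exact (hD0.neg_mem_iff.mp ha6) (leadsTo_mem_of_dirAff hD0 hlastDA)

lemma canVal_eq {D0 D : Set (Form S)} (hD0 : MCS D0) (hD : D ∈ canW D0)
    (I : Intervention S) : intVal (canF D0) (canEnv D) I = mcsVal D I := by
  apply intVal_eq (canF_recursive hD0)
  refine ⟨?_, ?_, ?_⟩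
  · intro X hX v hIX
    exact mcsVal_some hD.1 hIX
  · intro X hX hIX
    exact mcsVal_exo_none hD.1 hX hIX
  · intro V hV
    cases hIV : I V with
    | some v =>
      show mcsVal D I V = intF (canF D0) I V _
      simp only [intF, hIV, Option.getD_some]
      exact mcsVal_some hD.1 hIV
    | none =>
      show mcsVal D I V = intF (canF D0) I V (Env.restrict (mcsVal D I) V)
      simp only [intF, hIV, Option.getD_none]
      rw [canF_agrees hD0 hD hV]
      exact (mcsVal_to_full hD.1 hIV V).symm

lemma canEnv_complies {D0 D : Set (Form S)} (hD0 : MCS D0) (hD : D ∈ canW D0) :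
    Complies (canF D0) (canEnv D) := by
  intro V hV
  show mcsVal D (iEmpty S) V = canF D0 V ((canEnv D).restrict V)
  rw [canF_agrees hD0 hD hV]
  exact (mcsVal_to_full hD.1 rfl V).symm

theorem truth_lemma {D0 : Set (Form S)} (hD0 : MCS D0) {φ : Form S} (hb : IsBasic φ) :
    ∀ D ∈ canW D0, (φ ∈ D ↔ SatW φ (canF D0) (canT D0) (canEnv D)) := by
  induction hb with
  | eq Y y =>
    intro D hD
    rw [hD.1.iff_mem (ThmPAKC.aEmpty Y y)]
    constructor
    · intro h
      exact mcsVal_unique hD.1 h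
    · intro h
      show Form.int (iEmpty S) (Form.eq Y y) ∈ D
      have : mcsVal D (iEmpty S) Y = y := h
      rw [← this]
      exact mcsVal_mem hD.1 (iEmpty S) Y
  | intEq I Y y =>
    intro D hD
    show _ ↔ intVal (canF D0) (canEnv D) I Y = y
    rw [canVal_eq hD0 hD I]
    constructor
    · exact mcsVal_unique hD.1
    · intro h
      rw [← h]
      exact mcsVal_mem hD.1 I Y
  | neg hφ ih =>
    intro D hD
    rw [satW_neg, hD.1.neg_mem_iff, ih D hD]
  | conj h1 h2 ih1 ih2 =>
    intro D hD
    rw [satW_conj, hD.1.conj_mem, ih1 D hD, ih2 D hD]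
  | know hφ ih =>
    intro D hD
    constructor
    · intro h B hB
      obtain ⟨D', hD', rfl⟩ := hB
      have hk : Form.know _ ∈ D' := (hD'.2 _).mpr ((hD.2 _).mp h)
      exact (ih D' hD').mp (hD'.1.mem_mp (hD'.1.thm_mem (ThmPAKC.axT _)) hk)
    · intro h
      by_contra hne
      have hneg := hD.1.neg_mem_iff.mpr hne
      obtain ⟨D', hD'mcs, hnegφ, hagree⟩ := exists_mcs_neg hD.1 hneg
      have hD'W : D' ∈ canW D0 := ⟨hD'mcs, fun χ => (hagree χ).symm.trans (hD.2 χ)⟩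
      have hmem : canEnv D' ∈ canT D0 := ⟨D', hD'W, rfl⟩
      have hs := h (canEnv D') hmem
      exact (hD'mcs.neg_mem_iff.mp hnegφ) ((ih D' hD'W).mpr hs)

theorem provPAKC_complete {Γ : Set (Form S)} {χ : Form S}
    (hsem : ∀ (F : StructFuns S) (T : Set (Env S)) (A : Env S),
      RecursiveF F → T.Nonempty → (∀ B ∈ T, Complies F B) → A ∈ T →
      (∀ ψ ∈ Γ, SatW ψ F T A) → SatW χ F T A) : ProvPAKC Γ χ := by
  by_contra hnp
  obtain ⟨D0, hsub, hD0⟩ := lindenbaum (con_insert_neg hnp)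
  have hD0W : D0 ∈ canW D0 := ⟨hD0, fun φ => Iff.rfl⟩
  have hF := canF_recursive hD0
  have hC : ∀ B ∈ canT D0, Complies (canF D0) B := by
    rintro B ⟨D, hD, rfl⟩
    exact canEnv_complies hD0 hD
  have hA : canEnv D0 ∈ canT D0 := ⟨D0, hD0W, rfl⟩
  have hsatiff : ∀ ψ : Form S, ψ ∈ D0 ↔ SatW ψ (canF D0) (canT D0) (canEnv D0) := by
    intro ψ
    obtain ⟨ψ', hb, hiff⟩ := basicify ψ
    have h1 : ψ ∈ D0 ↔ ψ' ∈ D0 := hD0.iff_mem hiff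
    have h2 := truth_lemma hD0 hb D0 hD0W
    have h3 : SatW ψ (canF D0) (canT D0) (canEnv D0) ↔
        SatW ψ' (canF D0) (canT D0) (canEnv D0) :=
      satW_iffF.mp (thmPAKC_valid hiff (canF D0) (canT D0) (canEnv D0) hF hC hA)
    exact h1.trans (h2.trans h3.symm)
  have hΓ : ∀ ψ ∈ Γ, SatW ψ (canF D0) (canT D0) (canEnv D0) := fun ψ hψ =>
    (hsatiff ψ).mp (hsub (Set.mem_insert_of_mem _ hψ))
  have hχ := hsem (canF D0) (canT D0) (canEnv D0) hF ⟨_, hA⟩ hC hA hΓ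
  have hχmem : χ ∈ D0 := (hsatiff χ).mpr hχ
  have hnegχ : Form.neg χ ∈ D0 := hsub (Set.mem_insert _ _)
  exact (hD0.neg_mem_iff.mp hnegχ) hχmem

end Stage8c

/-- Theorem: the proof system L_PAKC is sound and strongly complete for the
language L_PAKC with respect to epistemic (recursive) causal models. -/
theorem LPAKC_sound_and_strongly_complete (S : Sig) (Γ : Set (Form S)) (χ : Form S) :
    ProvPAKC Γ χ ↔
      (∀ (F : StructFuns S) (T : Set (Env S)) (A : Env S),
        RecursiveF F → T.Nonempty → (∀ B ∈ T, Complies F B) → A ∈ T →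
        (∀ ψ ∈ Γ, SatW ψ F T A) → SatW χ F T A) :=
  ⟨provPAKC_sound, provPAKC_complete⟩
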